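/- arXiv:1302.7109 — 12 statements merged into one kernel-verified Lean document; each statement's English description precedes it below -/
import Mathlib

section
/- Let (G, +) be a commutative groupoid and let M be a multiset over G of cardinality n ≥ 2, say M = ⟨m_1, …, m_n⟩. Define δ_M : G → ℕ by δ_M(x) = |{ {i,j} ⊆ {1,…,n} : i < j and m_i + m_j = x }|. Then Σ_{x ∈ G} δ_M(x) = C(n,2), and for every x ∈ G one has N_M(x) = 𝟏_M(x) · C(n−1,2) + δ_M(x). -/
/-- The multiset ⟨m 1, …, m n⟩ determined by a tuple. -/
def msOfFn {G : Type*} {n : ℕ} (m : Fin n → G) : Multiset G := (List.ofFn m : List G)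

/-- The card M_{i,j} of the multiset ⟨m 1, …, m n⟩ (for a commutative groupoid
operation `op`): replace the two entries at positions `i` and `j` by their sum. -/
def mcard {G : Type*} (op : G → G → G) {n : ℕ} (m : Fin n → G) (i j : Fin n) :
    Multiset G :=
  ((Finset.univ.filter (fun k : Fin n => k ≠ i ∧ k ≠ j)).val.map m) + {op (m i) (m j)}

/-- The deck of the multiset ⟨m 1, …, m n⟩: the multiset of all C(n,2) cards. -/
def mdeck {G : Type*} (op : G → G → G) {n : ℕ} (m : Fin n → G) :
    Multiset (Multiset G) :=
  (Finset.univ.filter (fun p : Fin n × Fin n => p.1 < p.2)).val.map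
    (fun p => mcard op m p.1 p.2)

open Finset

lemma cardA (n : ℕ) :
    #(Finset.univ.filter fun p : Fin n × Fin n => p.1 < p.2) = n.choose 2 := by
  rw [Finset.card_filter, ← Finset.univ_product_univ, Finset.sum_product_right]
  have h : ∀ j : Fin n, (∑ i : Fin n, if (i, j).1 < (i, j).2 then 1 else 0) = (j : ℕ) := by
    intro j
    rw [← Finset.card_filter]
    have : (Finset.univ.filter fun i : Fin n => (i, j).1 < (i, j).2) = Finset.Iio j := by
      ext i; simp
    rw [this, Fin.card_Iio]
  rw [Finset.sum_congr rfl fun j _ => h j]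
  exact (Fin.sum_univ_eq_sum_range (fun i => i) n).trans
    (by rw [Finset.sum_range_id, Nat.choose_two_right])

lemma cardB (m : ℕ) (k : Fin (m + 1)) :
    #(Finset.univ.filter fun p : Fin (m + 1) × Fin (m + 1) =>
        p.1 < p.2 ∧ (k ≠ p.1 ∧ k ≠ p.2)) = m.choose 2 := by
  rw [← cardA m]
  symm
  apply Finset.card_bij (fun p _ => (k.succAbove p.1, k.succAbove p.2))
  · intro p hp
    simp only [Finset.mem_filter, Finset.mem_univ, true_and] at hp ⊢
    exact ⟨Fin.succAbove_lt_succAbove_iff.2 hp,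
      (Fin.succAbove_ne k p.1).symm.symm ∘ Eq.symm, (Fin.succAbove_ne k p.2) ∘ Eq.symm⟩
  · intro p _ q _ h
    have h1 := congrArg Prod.fst h
    have h2 := congrArg Prod.snd h
    simp only at h1 h2
    exact Prod.ext (Fin.succAbove_right_injective h1) (Fin.succAbove_right_injective h2)
  · intro p hp
    simp only [Finset.mem_filter, Finset.mem_univ, true_and] at hp
    obtain ⟨hlt, h1, h2⟩ := hp
    obtain ⟨i, hi⟩ := Fin.exists_succAbove_eq (Ne.symm h1)
    obtain ⟨j, hj⟩ := Fin.exists_succAbove_eq (Ne.symm h2)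
    refine ⟨(i, j), ?_, ?_⟩
    · simp only [Finset.mem_filter, Finset.mem_univ, true_and]
      rw [← Fin.succAbove_lt_succAbove_iff (p := k), hi, hj]; exact hlt
    · simp [hi, hj]

lemma msOfFn_eq {G : Type*} {n : ℕ} (m : Fin n → G) :
    msOfFn m = Multiset.map m Finset.univ.val := by
  simp [msOfFn, List.ofFn_eq_map, Fin.univ_def]

theorem stmt0 {G : Type*} [DecidableEq G] (op : G → G → G)
    (hcomm : ∀ a b : G, op a b = op b a) {n : ℕ} (hn : 2 ≤ n) (m : Fin n → G) :
    ∃ δ : G → ℕ,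
      (∀ x : G,
        δ x = ((Finset.univ.filter (fun p : Fin n × Fin n => p.1 < p.2)).val.map
            (fun p => op (m p.1) (m p.2))).count x) ∧
      (∑ᶠ x : G, δ x) = n.choose 2 ∧
      (∀ x : G,
        Multiset.count x (mdeck op m).sum
          = Multiset.count x (msOfFn m) * (n - 1).choose 2 + δ x) := by
  obtain ⟨s, rfl⟩ : ∃ s, n = s + 1 := ⟨n - 1, by omega⟩
  set P : Finset (Fin (s+1) × Fin (s+1)) :=
    Finset.univ.filter (fun p : Fin (s+1) × Fin (s+1) => p.1 < p.2) with hP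
  set S : Multiset G := P.val.map (fun p => op (m p.1) (m p.2)) with hS
  refine ⟨fun x => S.count x, fun _ => rfl, ?_, ?_⟩
  · have hsupp : (Function.support fun x => S.count x) ⊆ (S.toFinset : Set G) := by
      intro x hx
      simp only [Function.mem_support, ne_eq] at hx
      simpa [Multiset.mem_toFinset] using Multiset.count_pos.1 (Nat.pos_of_ne_zero hx)
    rw [finsum_eq_finset_sum_of_support_subset _ hsupp, Multiset.toFinset_sum_count_eq]
    rw [hS, Multiset.card_map, ← Finset.card_def, hP, cardA]
  · intro x
    have hcount_m : Multiset.count x (msOfFn m)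
        = #(Finset.univ.filter fun k : Fin (s+1) => x = m k) := by
      rw [msOfFn_eq, Multiset.count_map]; rfl
    have hdeck : (mdeck op m).sum = ∑ p ∈ P, mcard op m p.1 p.2 := rfl
    rw [hdeck, Multiset.count_sum']
    have hcard : ∀ p : Fin (s+1) × Fin (s+1),
        Multiset.count x (mcard op m p.1 p.2)
          = #(Finset.univ.filter fun k : Fin (s+1) => (k ≠ p.1 ∧ k ≠ p.2) ∧ x = m k)
            + (if x = op (m p.1) (m p.2) then 1 else 0) := by
      intro p
      rw [mcard, Multiset.count_add, Multiset.count_map, Multiset.count_singleton]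
      congr 1
      rw [← Finset.filter_val, ← Finset.card_def, Finset.filter_filter]
    rw [Finset.sum_congr rfl fun p _ => hcard p, Finset.sum_add_distrib]
    congr 1
    · -- main double counting
      have step1 : ∀ p ∈ P,
          #(Finset.univ.filter fun k : Fin (s+1) => (k ≠ p.1 ∧ k ≠ p.2) ∧ x = m k)
            = ∑ k : Fin (s+1), if (k ≠ p.1 ∧ k ≠ p.2) ∧ x = m k then 1 else 0 :=
        fun p _ => Finset.card_filter _ _
      rw [Finset.sum_congr rfl step1, Finset.sum_comm]
      have step2 : ∀ k : Fin (s+1),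
          (∑ p ∈ P, if (k ≠ p.1 ∧ k ≠ p.2) ∧ x = m k then 1 else 0)
            = (if x = m k then 1 else 0) * s.choose 2 := by
        intro k
        by_cases hx : x = m k
        · simp only [hx, and_true, if_true, one_mul]
          rw [← Finset.card_filter, hP, Finset.filter_filter]
          exact cardB s k
        · simp [hx]
      rw [Finset.sum_congr rfl fun k _ => step2 k, ← Finset.sum_mul, ← Finset.card_filter,
        hcount_m]
      simp
    · show (∑ p ∈ P, if x = op (m p.1) (m p.2) then 1 else 0)
        = Multiset.count x (Multiset.map (fun p => op (m p.1) (m p.2)) P.val)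
      rw [Multiset.count_map, ← Finset.filter_val, ← Finset.card_def, Finset.card_filter]
end

section
/- Let (G, +) be a commutative groupoid, let n ≥ 4, and let M and M' be multisets of cardinality n over G. Assume that N_M(x) = N_{M'}(x) for all x ∈ G and that there exists y ∈ G such that N_M(y) is not a multiple of C(n−1,2). Then there exist elements a, b ∈ G such that M' = (M \ ⟨a⟩) ⊎ ⟨b⟩. -/
/-- The multiset of pairwise sums. -/
def psums {G : Type*} (op : G → G → G) {n : ℕ} (m : Fin n → G) : Multiset G :=
  (Finset.univ.filter (fun p : Fin n × Fin n => p.1 < p.2)).val.map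
    (fun p => op (m p.1) (m p.2))

lemma count_msOfFn {G : Type*} [DecidableEq G] {n : ℕ} (m : Fin n → G) (x : G) :
    Multiset.count x (msOfFn m) = ∑ k : Fin n, if x = m k then 1 else 0 := by
  rw [show msOfFn m = Multiset.map m Finset.univ.val by simp [msOfFn, List.ofFn_eq_map]]
  rw [Multiset.count_map, ← Finset.filter_val]
  show (Finset.filter _ _).card = _
  rw [Finset.card_filter]

lemma count_finsetmap {G : Type*} {α : Type*} [DecidableEq G] (s : Finset α) (f : α → G)
    (x : G) :
    Multiset.count x (s.val.map f) = ∑ k ∈ s, if x = f k then 1 else 0 := by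
  rw [Multiset.count_map, ← Finset.filter_val]
  show (Finset.filter _ _).card = _
  rw [Finset.card_filter]

lemma card_offDiag_filter_lt {α : Type*} [LinearOrder α] [DecidableEq α] (s : Finset α) :
    ((s.offDiag).filter fun p => p.1 < p.2).card = s.card.choose 2 := by
  have hswap : ((s.offDiag).filter fun p => p.1 < p.2).card
      = ((s.offDiag).filter fun p => p.2 < p.1).card := by
    apply Finset.card_nbij' Prod.swap Prod.swap
    · intro p hp; simp only [Finset.mem_coe, Finset.mem_filter, Finset.mem_offDiag] at hp ⊢
      exact ⟨⟨hp.1.2.1, hp.1.1, hp.1.2.2.symm⟩, hp.2⟩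
    · intro p hp; simp only [Finset.mem_coe, Finset.mem_filter, Finset.mem_offDiag] at hp ⊢
      exact ⟨⟨hp.1.2.1, hp.1.1, hp.1.2.2.symm⟩, hp.2⟩
    · intro p _; rfl
    · intro p _; rfl
  have hcongr : (s.offDiag).filter (fun p => ¬ p.1 < p.2)
      = (s.offDiag).filter fun p => p.2 < p.1 := by
    apply Finset.filter_congr; intro p hp
    simp only [Finset.mem_offDiag] at hp
    simp only [not_lt, eq_iff_iff]
    exact ⟨fun h => lt_of_le_of_ne h (Ne.symm hp.2.2), le_of_lt⟩
  have hpart := Finset.card_filter_add_card_filter_not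
    (s := s.offDiag) (p := fun p => p.1 < p.2)
  rw [hcongr, ← hswap] at hpart
  rw [Finset.offDiag_card] at hpart
  rw [Nat.choose_two_right]
  have h2 : s.card * (s.card - 1) = s.card * s.card - s.card := by
    rw [← Nat.pred_eq_sub_one, Nat.mul_pred]
  omega

lemma card_pairs {n : ℕ} :
    (Finset.univ.filter fun p : Fin n × Fin n => p.1 < p.2).card = n.choose 2 := by
  have h : (Finset.univ.filter fun p : Fin n × Fin n => p.1 < p.2)
      = ((Finset.univ : Finset (Fin n)).offDiag.filter fun p => p.1 < p.2) := by
    ext p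
    simp only [Finset.mem_filter, Finset.mem_univ, true_and, Finset.mem_offDiag]
    constructor
    · intro h; exact ⟨ne_of_lt h, h⟩
    · tauto
  rw [h, card_offDiag_filter_lt, Finset.card_univ, Fintype.card_fin]

lemma card_pairs_avoid {n : ℕ} (k : Fin n) :
    (Finset.univ.filter fun p : Fin n × Fin n =>
      p.1 < p.2 ∧ (k ≠ p.1 ∧ k ≠ p.2)).card = (n - 1).choose 2 := by
  have h : (Finset.univ.filter fun p : Fin n × Fin n => p.1 < p.2 ∧ (k ≠ p.1 ∧ k ≠ p.2))
      = ((Finset.univ.erase k).offDiag.filter fun p => p.1 < p.2) := by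
    ext p
    simp only [Finset.mem_filter, Finset.mem_univ, true_and, Finset.mem_offDiag,
      Finset.mem_erase, and_true]
    constructor
    · rintro ⟨h1, h2, h3⟩; exact ⟨⟨h2.symm, h3.symm, ne_of_lt h1⟩, h1⟩
    · rintro ⟨⟨h1, h2, _⟩, h4⟩; exact ⟨h4, h1.symm, h2.symm⟩
  rw [h, card_offDiag_filter_lt, Finset.card_erase_of_mem (Finset.mem_univ k),
    Finset.card_univ, Fintype.card_fin]

lemma count_mdeck {G : Type*} [DecidableEq G] (op : G → G → G) {n : ℕ} (m : Fin n → G)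
    (x : G) :
    Multiset.count x (mdeck op m).sum
      = (n - 1).choose 2 * Multiset.count x (msOfFn m) + Multiset.count x (psums op m) := by
  rw [mdeck, Multiset.count_sum]
  have hsum : (Multiset.map (fun p => Multiset.count x (mcard op m p.1 p.2))
      (Finset.univ.filter fun p : Fin n × Fin n => p.1 < p.2).val).sum
      = ∑ p ∈ Finset.univ.filter (fun p : Fin n × Fin n => p.1 < p.2),
          Multiset.count x (mcard op m p.1 p.2) := rfl
  rw [hsum]
  have hcard : ∀ p : Fin n × Fin n, Multiset.count x (mcard op m p.1 p.2)
      = (∑ k : Fin n, if (k ≠ p.1 ∧ k ≠ p.2) then (if x = m k then 1 else 0) else 0)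
        + (if x = op (m p.1) (m p.2) then 1 else 0) := by
    intro p
    rw [mcard, Multiset.count_add, Multiset.count_singleton, count_finsetmap,
      Finset.sum_filter]
  simp only [hcard]
  rw [Finset.sum_add_distrib]
  congr 1
  · rw [Finset.sum_comm]
    have hk : ∀ k : Fin n,
        (∑ p ∈ Finset.univ.filter (fun p : Fin n × Fin n => p.1 < p.2),
          if (k ≠ p.1 ∧ k ≠ p.2) then (if x = m k then 1 else 0) else 0)
        = (if x = m k then 1 else 0) * (n - 1).choose 2 := by
      intro k
      by_cases hq : x = m k
      · simp only [hq, if_true, if_pos rfl, one_mul]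
        rw [← card_pairs_avoid k, Finset.card_filter, Finset.sum_filter]
        simp only [ite_and]
      · simp [hq]
    rw [Finset.sum_congr rfl fun k _ => hk k, ← Finset.sum_mul, ← count_msOfFn,
      mul_comm]
  · rw [psums, count_finsetmap]

lemma card_psums {G : Type*} (op : G → G → G) {n : ℕ} (m : Fin n → G) :
    Multiset.card (psums op m) = n.choose 2 := by
  rw [psums, Multiset.card_map]
  exact card_pairs

lemma two_mul_choose_two (a : ℕ) : 2 * a.choose 2 = a * (a - 1) := by
  induction a with
  | zero => rfl
  | succ k ih =>
    rw [Nat.choose_succ_succ, Nat.choose_one_right, Nat.mul_add, ih, Nat.succ_sub_one]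
    cases k with
    | zero => rfl
    | succ j => rw [Nat.succ_sub_one]; ring

lemma sum_count_le {G : Type*} [DecidableEq G] (Q : Finset G) (T : Multiset G) :
    ∑ x ∈ Q, T.count x ≤ Multiset.card T := by
  have h1 : ∑ x ∈ Q, T.count x = ∑ x ∈ Q ∩ T.toFinset, T.count x := by
    refine (Finset.sum_subset Finset.inter_subset_left ?_).symm
    intro x hx hnx
    rw [Multiset.count_eq_zero]
    intro hmem
    exact hnx (Finset.mem_inter.2 ⟨hx, Multiset.mem_toFinset.2 hmem⟩)
  rw [h1, ← Multiset.toFinset_sum_count_eq T]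
  exact Finset.sum_le_sum_of_subset Finset.inter_subset_right

lemma key {G : Type*} [DecidableEq G] {c n : ℕ} (hn : 4 ≤ n)
    (hc2 : 2 * c = (n - 1) * (n - 2))
    (A A' S S' : Multiset G) (hS' : Multiset.card S' = c + (n - 1))
    (heq : ∀ x, c * A.count x + S.count x = c * A'.count x + S'.count x)
    (t : Finset G) (ht : ∀ x, x ∉ t → A.count x = 0)
    (hK : 2 ≤ ∑ x ∈ t.filter (fun x => A'.count x < A.count x),
      (A.count x - A'.count x)) :
    ∀ x, c ∣ S.count x := by
  set P := t.filter (fun x => A'.count x < A.count x) with hP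
  set K := ∑ x ∈ P, (A.count x - A'.count x) with hKdef
  have h1 : ∀ x ∈ P, S'.count x = c * (A.count x - A'.count x) + S.count x := by
    intro x hx
    have hlt := (Finset.mem_filter.1 hx).2
    have h := heq x
    have hA : A.count x = A'.count x + (A.count x - A'.count x) := by omega
    rw [hA, mul_add] at h
    omega
  have h2 : ∑ x ∈ P, S'.count x = c * K + ∑ x ∈ P, S.count x := by
    rw [hKdef, Finset.mul_sum, ← Finset.sum_add_distrib]
    exact Finset.sum_congr rfl h1
  have h3 : ∑ x ∈ P, S'.count x ≤ c + (n - 1) := hS' ▸ sum_count_le P S'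
  have h4 : c * 2 ≤ c * K := Nat.mul_le_mul_left c hK
  have hcle : c ≤ n - 1 := by omega
  have hn4 : n = 4 := by
    have h5 : (n - 1) * (n - 2) ≤ (n - 1) * 2 := by omega
    have h6 : n - 2 ≤ 2 := Nat.le_of_mul_le_mul_left h5 (by omega)
    omega
  have hc3 : c = 3 := by subst hn4; omega
  subst hc3; subst hn4
  have hPS : ∑ x ∈ P, S.count x = 0 ∧ ∑ x ∈ P, S'.count x = 6 := by omega
  have hP0 : ∀ x ∈ P, S.count x = 0 :=
    fun x hx => (Finset.sum_eq_zero_iff.1 hPS.1) x hx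
  have hnotP : ∀ x, x ∉ P → S'.count x = 0 := by
    intro x hx
    have hins := sum_count_le (insert x P) S'
    rw [Finset.sum_insert hx, hS'] at hins
    omega
  intro x
  by_cases hx : x ∈ P
  · rw [hP0 x hx]; exact dvd_zero 3
  · have hle : A.count x ≤ A'.count x := by
      by_cases hxt : x ∈ t
      · have hiff : x ∉ P ↔ ¬ (A'.count x < A.count x) := by
          simp [hP, Finset.mem_filter, hxt]
        exact Nat.le_of_not_lt (hiff.1 hx)
      · rw [ht x hxt]; exact Nat.zero_le _
    have h := heq x
    rw [hnotP x hx] at h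
    refine ⟨A'.count x - A.count x, ?_⟩
    have hA : A'.count x = A.count x + (A'.count x - A.count x) := by omega
    rw [hA, mul_add] at h
    omega

theorem stmt1 {G : Type*} [DecidableEq G] (op : G → G → G)
    (hcomm : ∀ a b : G, op a b = op b a) {n : ℕ} (hn : 4 ≤ n)
    (m m' : Fin n → G)
    (hN : ∀ x : G,
      Multiset.count x (mdeck op m).sum = Multiset.count x (mdeck op m').sum)
    (hy : ∃ y : G, ¬ ((n - 1).choose 2 ∣ Multiset.count y (mdeck op m).sum)) :
    ∃ a b : G, msOfFn m' = (msOfFn m).erase a + {b} := by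
  classical
  obtain ⟨y, hy⟩ := hy
  set c := (n - 1).choose 2 with hc
  set A := msOfFn m with hA
  set A' := msOfFn m' with hA'
  set S := psums op m with hS
  set S' := psums op m' with hS'
  have hcnt : ∀ x, Multiset.count x (mdeck op m).sum = c * A.count x + S.count x :=
    fun x => count_mdeck op m x
  have hcnt' : ∀ x, Multiset.count x (mdeck op m').sum = c * A'.count x + S'.count x :=
    fun x => count_mdeck op m' x
  have heq : ∀ x, c * A.count x + S.count x = c * A'.count x + S'.count x := by
    intro x
    rw [← hcnt x, ← hcnt' x]
    exact hN x
  have hcardA : Multiset.card A = n := by simp [hA, msOfFn]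
  have hcardA' : Multiset.card A' = n := by simp [hA', msOfFn]
  have hchoose : n.choose 2 = c + (n - 1) := by
    obtain ⟨a, rfl⟩ : ∃ a, n = a + 2 := ⟨n - 2, by omega⟩
    have h1 := two_mul_choose_two (a + 2)
    have h2 := two_mul_choose_two (a + 1)
    have e1 : a + 2 - 1 = a + 1 := rfl
    have e2 : a + 1 - 1 = a := rfl
    rw [e1] at h1
    rw [e2] at h2
    rw [hc, e1]
    linarith [h1, h2]
  have hcardS : Multiset.card S = c + (n - 1) := by
    rw [hS, card_psums, hchoose]
  have hcardS' : Multiset.card S' = c + (n - 1) := by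
    rw [hS', card_psums, hchoose]
  have hc2 : 2 * c = (n - 1) * (n - 2) := by
    have h := two_mul_choose_two (n - 1)
    rw [show n - 1 - 1 = n - 2 by omega] at h
    rw [hc, h]
  have hyS : ¬ ∀ x, c ∣ S.count x := by
    intro hall
    exact hy (by rw [hcnt y]; exact Nat.dvd_add (dvd_mul_right _ _) (hall y))
  have hyS' : ¬ ∀ x, c ∣ S'.count x := by
    intro hall
    apply hy
    rw [hN y, hcnt' y]
    exact Nat.dvd_add (dvd_mul_right _ _) (hall y)
  set t := A.toFinset ∪ A'.toFinset with htdef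
  have htA : ∀ x, x ∉ t → A.count x = 0 := by
    intro x hx
    rw [Multiset.count_eq_zero]
    intro hm
    exact hx (Finset.mem_union_left _ (Multiset.mem_toFinset.2 hm))
  have htA' : ∀ x, x ∉ t → A'.count x = 0 := by
    intro x hx
    rw [Multiset.count_eq_zero]
    intro hm
    exact hx (Finset.mem_union_right _ (Multiset.mem_toFinset.2 hm))
  set P := t.filter (fun x => A'.count x < A.count x) with hPdef
  set Q := t.filter (fun x => A.count x < A'.count x) with hQdef
  set K := ∑ x ∈ P, (A.count x - A'.count x) with hKdef
  set K' := ∑ x ∈ Q, (A'.count x - A.count x) with hK'def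
  have hKle : K ≤ 1 := by
    by_contra h
    refine hyS (key hn hc2 A A' S S' hcardS' heq t htA ?_)
    show 2 ≤ K
    omega
  have hK'le : K' ≤ 1 := by
    by_contra h
    refine hyS' (key hn hc2 A' A S' S hcardS (fun x => (heq x).symm) t htA' ?_)
    show 2 ≤ K'
    omega
  -- balance: K = K'
  have hsumA : ∑ x ∈ t, A.count x = n := by
    have h1 : ∑ x ∈ t, A.count x = ∑ x ∈ A.toFinset, A.count x := by
      refine (Finset.sum_subset Finset.subset_union_left ?_).symm
      intro x _ hx
      exact Multiset.count_eq_zero.2 fun hm => hx (Multiset.mem_toFinset.2 hm)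
    rw [h1, Multiset.toFinset_sum_count_eq, hcardA]
  have hsumA' : ∑ x ∈ t, A'.count x = n := by
    have h1 : ∑ x ∈ t, A'.count x = ∑ x ∈ A'.toFinset, A'.count x := by
      refine (Finset.sum_subset Finset.subset_union_right ?_).symm
      intro x _ hx
      exact Multiset.count_eq_zero.2 fun hm => hx (Multiset.mem_toFinset.2 hm)
    rw [h1, Multiset.toFinset_sum_count_eq, hcardA']
  set E := (t.filter (fun x => ¬ A'.count x < A.count x)).filter
    (fun x => ¬ A.count x < A'.count x) with hEdef
  have hQ2 : (t.filter (fun x => ¬ A'.count x < A.count x)).filter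
      (fun x => A.count x < A'.count x) = Q := by
    rw [hQdef, Finset.filter_filter]
    ext x
    simp only [Finset.mem_filter]
    constructor
    · rintro ⟨h1, _, h2⟩; exact ⟨h1, h2⟩
    · rintro ⟨h1, h2⟩; exact ⟨h1, by omega, h2⟩
  have hsplit : ∀ B : Multiset G, ∑ x ∈ t, B.count x
      = ∑ x ∈ P, B.count x + (∑ x ∈ Q, B.count x + ∑ x ∈ E, B.count x) := by
    intro B
    rw [← Finset.sum_filter_add_sum_filter_not t (fun x => A'.count x < A.count x)
      (fun x => B.count x),
      ← Finset.sum_filter_add_sum_filter_not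
        (t.filter (fun x => ¬ A'.count x < A.count x))
        (fun x => A.count x < A'.count x) (fun x => B.count x), hQ2]
  have hPK : ∑ x ∈ P, A.count x = ∑ x ∈ P, A'.count x + K := by
    rw [hKdef, ← Finset.sum_add_distrib]
    refine Finset.sum_congr rfl fun x hx => ?_
    have := (Finset.mem_filter.1 hx).2
    omega
  have hQK : ∑ x ∈ Q, A'.count x = ∑ x ∈ Q, A.count x + K' := by
    rw [hK'def, ← Finset.sum_add_distrib]
    refine Finset.sum_congr rfl fun x hx => ?_
    have := (Finset.mem_filter.1 hx).2
    omega
  have hE : ∑ x ∈ E, A.count x = ∑ x ∈ E, A'.count x := by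
    refine Finset.sum_congr rfl fun x hx => ?_
    have h1 := (Finset.mem_filter.1 hx).2
    have h2 := (Finset.mem_filter.1 (Finset.mem_filter.1 hx).1).2
    omega
  have hbalA := hsplit A
  have hbalA' := hsplit A'
  have hKK' : K = K' := by omega
  obtain hK0 | hK1 : K = 0 ∨ K = 1 := by omega
  · -- A = A'
    have hsP : ∑ x ∈ P, (A.count x - A'.count x) = 0 := by omega
    have hsQ : ∑ x ∈ Q, (A'.count x - A.count x) = 0 := by omega
    have hAA' : A' = A := by
      refine Multiset.ext.2 fun x => ?_
      by_cases hxt : x ∈ t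
      · have h1 : ¬ A'.count x < A.count x := by
          intro hlt
          have hxP : x ∈ P := Finset.mem_filter.2 ⟨hxt, hlt⟩
          have := Finset.sum_eq_zero_iff.1 hsP x hxP
          omega
        have h2 : ¬ A.count x < A'.count x := by
          intro hlt
          have hxQ : x ∈ Q := Finset.mem_filter.2 ⟨hxt, hlt⟩
          have := Finset.sum_eq_zero_iff.1 hsQ x hxQ
          omega
        omega
      · rw [htA x hxt, htA' x hxt]
    have hn0 : 0 < n := by omega
    have hmem : m ⟨0, hn0⟩ ∈ A := Multiset.mem_coe.mpr
      (by rw [List.mem_ofFn]; exact ⟨⟨0, hn0⟩, rfl⟩)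
    refine ⟨m ⟨0, hn0⟩, m ⟨0, hn0⟩, ?_⟩
    have hrest : A.erase (m ⟨0, hn0⟩) + {m ⟨0, hn0⟩} = A := by
      rw [add_comm, Multiset.singleton_add, Multiset.cons_erase hmem]
    exact hAA'.trans hrest.symm
  · -- K = K' = 1
    have hK'1 : K' = 1 := by omega
    have hPne : P.Nonempty := by
      rw [Finset.nonempty_iff_ne_empty]
      intro hemp
      rw [hKdef, hemp, Finset.sum_empty] at hK1
      exact absurd hK1 (by omega)
    have hQne : Q.Nonempty := by
      rw [Finset.nonempty_iff_ne_empty]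
      intro hemp
      rw [hK'def, hemp, Finset.sum_empty] at hK'1
      exact absurd hK'1 (by omega)
    have hPcard : P.card = 1 := by
      have h1 : P.card ≤ K := by
        rw [hKdef]
        calc P.card = ∑ _x ∈ P, 1 := by simp
          _ ≤ _ := Finset.sum_le_sum fun x hx => by
              have := (Finset.mem_filter.1 hx).2; omega
      have := Finset.card_pos.2 hPne
      omega
    have hQcard : Q.card = 1 := by
      have h1 : Q.card ≤ K' := by
        rw [hK'def]
        calc Q.card = ∑ _x ∈ Q, 1 := by simp
          _ ≤ _ := Finset.sum_le_sum fun x hx => by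
              have := (Finset.mem_filter.1 hx).2; omega
      have := Finset.card_pos.2 hQne
      omega
    obtain ⟨a, ha⟩ := Finset.card_eq_one.1 hPcard
    obtain ⟨b, hb⟩ := Finset.card_eq_one.1 hQcard
    have haP : a ∈ P := ha ▸ Finset.mem_singleton_self a
    have hbQ : b ∈ Q := hb ▸ Finset.mem_singleton_self b
    have ha1 : A.count a = A'.count a + 1 := by
      have hlt := (Finset.mem_filter.1 haP).2
      have hKa : K = A.count a - A'.count a := by
        rw [hKdef, ha, Finset.sum_singleton]
      omega
    have hb1 : A'.count b = A.count b + 1 := by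
      have hlt := (Finset.mem_filter.1 hbQ).2
      have hKb : K' = A'.count b - A.count b := by
        rw [hK'def, hb, Finset.sum_singleton]
      omega
    have hab : a ≠ b := by
      intro h
      rw [h] at ha1
      omega
    refine ⟨a, b, ?_⟩
    show A' = A.erase a + {b}
    refine Multiset.ext.2 fun x => ?_
    rw [Multiset.count_add, Multiset.count_singleton]
    by_cases hxa : x = a
    · subst hxa
      rw [Multiset.count_erase_self, if_neg hab]
      omega
    · rw [Multiset.count_erase_of_ne hxa]
      by_cases hxb : x = b
      · subst hxb
        rw [if_pos rfl]
        omega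
      · rw [if_neg hxb]
        by_cases hxt : x ∈ t
        · have h1 : ¬ A'.count x < A.count x := by
            intro hlt
            have hxP : x ∈ P := Finset.mem_filter.2 ⟨hxt, hlt⟩
            rw [ha, Finset.mem_singleton] at hxP
            exact hxa hxP
          have h2 : ¬ A.count x < A'.count x := by
            intro hlt
            have hxQ : x ∈ Q := Finset.mem_filter.2 ⟨hxt, hlt⟩
            rw [hb, Finset.mem_singleton] at hxQ
            exact hxb hxQ
          omega
        · rw [htA x hxt, htA' x hxt]
end

section
/- Let (G, +) be a commutative groupoid with elements r, s, t, u, v satisfying x + u = v and x + v = u for all x ∈ {r, s, t}, and r + s = s, s + t = t, t + r = r. Let M = ⟨r, s, t, u⟩ and M' = ⟨r, s, t, v⟩. Then deck M = deck M' = ⟨⟨r, s, u⟩, ⟨r, t, u⟩, ⟨s, t, u⟩, ⟨r, s, v⟩, ⟨r, t, v⟩, ⟨s, t, v⟩⟩; moreover, if u ≠ v then M ≠ M'. -/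
theorem stmt6 {G : Type*} (op : G → G → G)
    (hcomm : ∀ a b : G, op a b = op b a)
    (r s t u v : G)
    (h1 : ∀ x ∈ ({r, s, t} : Set G), op x u = v ∧ op x v = u)
    (h2 : op r s = s) (h3 : op s t = t) (h4 : op t r = r) :
    mdeck op ![r, s, t, u] = mdeck op ![r, s, t, v] ∧
    mdeck op ![r, s, t, u] =
      ({({r, s, u} : Multiset G), {r, t, u}, {s, t, u},
        {r, s, v}, {r, t, v}, {s, t, v}} : Multiset (Multiset G)) ∧
    (u ≠ v → ({r, s, t, u} : Multiset G) ≠ ({r, s, t, v} : Multiset G)) := by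
  obtain ⟨hru, hrv⟩ := h1 r (by simp)
  obtain ⟨hsu, hsv⟩ := h1 s (by simp)
  obtain ⟨htu, htv⟩ := h1 t (by simp)
  have h4' : op r t = r := (hcomm r t).trans h4
  have hf : (Finset.univ.filter (fun p : Fin 4 × Fin 4 => p.1 < p.2)).val =
      ({((0:Fin 4),(1:Fin 4)),(0,2),(0,3),(1,2),(1,3),(2,3)} : Multiset (Fin 4 × Fin 4)) := by
    decide
  have h01 : (Finset.univ.filter (fun k : Fin 4 => k ≠ 0 ∧ k ≠ 1)).val = ({2,3} : Multiset (Fin 4)) := by decide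
  have h02 : (Finset.univ.filter (fun k : Fin 4 => k ≠ 0 ∧ k ≠ 2)).val = ({1,3} : Multiset (Fin 4)) := by decide
  have h03 : (Finset.univ.filter (fun k : Fin 4 => k ≠ 0 ∧ k ≠ 3)).val = ({1,2} : Multiset (Fin 4)) := by decide
  have h12 : (Finset.univ.filter (fun k : Fin 4 => k ≠ 1 ∧ k ≠ 2)).val = ({0,3} : Multiset (Fin 4)) := by decide
  have h13 : (Finset.univ.filter (fun k : Fin 4 => k ≠ 1 ∧ k ≠ 3)).val = ({0,2} : Multiset (Fin 4)) := by decide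
  have h23 : (Finset.univ.filter (fun k : Fin 4 => k ≠ 2 ∧ k ≠ 3)).val = ({0,1} : Multiset (Fin 4)) := by decide
  have hA : mdeck op ![r, s, t, u] =
      ({({r, s, u} : Multiset G), {r, t, u}, {s, t, u},
        {r, s, v}, {r, t, v}, {s, t, v}} : Multiset (Multiset G)) := by
    simp only [mdeck, hf, mcard, Multiset.insert_eq_cons, Multiset.map_cons,
      Multiset.map_singleton, h01, h02, h03, h12, h13, h23,
      Matrix.cons_val_zero, Matrix.cons_val_one, Matrix.head_cons,
      Matrix.cons_val_two, Matrix.tail_cons, Matrix.cons_val_three]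
    rw [h2, h4', hru, h3, hsu, htu]
    simp only [Multiset.insert_eq_cons, ← Multiset.singleton_add]
    have e1 : {t} + {u} + {s} = ({s} + ({t} + {u}) : Multiset G) := by ac_rfl
    have e2 : {s} + {u} + {r} = ({r} + ({s} + {u}) : Multiset G) := by ac_rfl
    have e3 : {s} + {t} + {v} = ({s} + ({t} + {v}) : Multiset G) := by ac_rfl
    have e4 : {r} + {u} + {t} = ({r} + ({t} + {u}) : Multiset G) := by ac_rfl
    have e5 : {r} + {t} + {v} = ({r} + ({t} + {v}) : Multiset G) := by ac_rfl
    have e6 : {r} + {s} + {v} = ({r} + ({s} + {v}) : Multiset G) := by ac_rfl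
    rw [e1, e2, e3, e4, e5, e6]
    ac_rfl
  have hB : mdeck op ![r, s, t, v] =
      ({({r, s, u} : Multiset G), {r, t, u}, {s, t, u},
        {r, s, v}, {r, t, v}, {s, t, v}} : Multiset (Multiset G)) := by
    simp only [mdeck, hf, mcard, Multiset.insert_eq_cons, Multiset.map_cons,
      Multiset.map_singleton, h01, h02, h03, h12, h13, h23,
      Matrix.cons_val_zero, Matrix.cons_val_one, Matrix.head_cons,
      Matrix.cons_val_two, Matrix.tail_cons, Matrix.cons_val_three]
    rw [h2, h4', hrv, h3, hsv, htv]
    simp only [Multiset.insert_eq_cons, ← Multiset.singleton_add]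
    have e1 : {t} + {v} + {s} = ({s} + ({t} + {v}) : Multiset G) := by ac_rfl
    have e2 : {s} + {v} + {r} = ({r} + ({s} + {v}) : Multiset G) := by ac_rfl
    have e3 : {s} + {t} + {u} = ({s} + ({t} + {u}) : Multiset G) := by ac_rfl
    have e4 : {r} + {v} + {t} = ({r} + ({t} + {v}) : Multiset G) := by ac_rfl
    have e5 : {r} + {t} + {u} = ({r} + ({t} + {u}) : Multiset G) := by ac_rfl
    have e6 : {r} + {s} + {u} = ({r} + ({s} + {u}) : Multiset G) := by ac_rfl
    rw [e1, e2, e3, e4, e5, e6]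
    ac_rfl
  refine ⟨hA.trans hB.symm, hA, ?_⟩
  intro huv heq
  have hu : u ∈ ({r, s, t} : Set G) := by
    have : u ∈ ({r, s, t, v} : Multiset G) := heq ▸ (by simp : u ∈ ({r, s, t, u} : Multiset G))
    simp only [Multiset.insert_eq_cons, Multiset.mem_cons, Multiset.mem_singleton] at this
    rcases this with h | h | h | h
    · simp [h]
    · simp [h]
    · simp [h]
    · exact absurd h huv
  have hv : v ∈ ({r, s, t} : Set G) := by
    have : v ∈ ({r, s, t, u} : Multiset G) := heq ▸ (by simp : v ∈ ({r, s, t, v} : Multiset G))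
    simp only [Multiset.insert_eq_cons, Multiset.mem_cons, Multiset.mem_singleton] at this
    rcases this with h | h | h | h
    · simp [h]
    · simp [h]
    · simp [h]
    · exact absurd h.symm huv
  have h5 : op u v = u := (h1 u hu).2
  have h6 : op v u = v := (h1 v hv).1
  exact huv (h5.symm.trans ((hcomm u v).trans h6))
end

section
/- Let (G, +) be a commutative groupoid with elements r, s, t satisfying r + (r + s) = s, r + (r + t) = t, and (r + s) + (r + t) = s + t. Then the multisets M = ⟨r, s, t⟩ and M' = ⟨r, r + s, r + t⟩ satisfy deck M = deck M' = ⟨⟨r, s + t⟩, ⟨s, r + t⟩, ⟨t, r + s⟩⟩; moreover, if {r + s, r + t} ≠ {s, t} (as unordered pairs), then M ≠ M'. -/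
lemma mdeck3 {G : Type*} (op : G → G → G) (a b c : G) :
    mdeck op ![a,b,c] = {({c, op a b} : Multiset G), {b, op a c}, {a, op b c}} := rfl

lemma perm23 {α : Type*} (a b c : α) : ({a, b, c} : Multiset α) = {a, c, b} := by
  change (↑[a,b,c] : Multiset α) = ↑[a,c,b]
  exact Multiset.coe_eq_coe.mpr (List.Perm.cons a (List.Perm.swap c b []))

lemma perm13 {α : Type*} (a b c : α) : ({a, b, c} : Multiset α) = {c, b, a} := by
  change (↑[a,b,c] : Multiset α) = ↑[c,b,a]
  refine Multiset.coe_eq_coe.mpr ?_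
  exact (List.Perm.swap b a [c]).trans
    ((List.Perm.cons b (List.Perm.swap c a [])).trans (List.Perm.swap b c [a]).symm)

lemma perm12 {α : Type*} (a b c : α) : ({a, b, c} : Multiset α) = {b, a, c} := by
  change (↑[a,b,c] : Multiset α) = ↑[b,a,c]
  exact Multiset.coe_eq_coe.mpr (List.Perm.swap b a [c])

theorem stmt7 {G : Type*} (op : G → G → G)
    (hcomm : ∀ a b : G, op a b = op b a)
    (r s t : G)
    (h1 : op r (op r s) = s) (h2 : op r (op r t) = t)
    (h3 : op (op r s) (op r t) = op s t) :
    mdeck op ![r, s, t] = mdeck op ![r, op r s, op r t] ∧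
    mdeck op ![r, s, t] =
      ({({r, op s t} : Multiset G), {s, op r t}, {t, op r s}} : Multiset (Multiset G)) ∧
    (({op r s, op r t} : Multiset G) ≠ ({s, t} : Multiset G) →
      ({r, s, t} : Multiset G) ≠ ({r, op r s, op r t} : Multiset G)) := by
  have hd1 : mdeck op ![r, s, t]
      = ({({r, op s t} : Multiset G), {s, op r t}, {t, op r s}} : Multiset (Multiset G)) := by
    rw [mdeck3, perm13]
  refine ⟨?_, hd1, ?_⟩
  · rw [hd1, mdeck3, h1, h2, h3]
    rw [Multiset.pair_comm (op r t) s, Multiset.pair_comm (op r s) t]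
    rw [perm13 ({s, op r t} : Multiset G), perm23]
  · intro hne heq
    apply hne
    simp only [Multiset.insert_eq_cons] at heq
    rw [Multiset.cons_inj_right] at heq
    exact heq.symm
end

section
/- Let (G, +) be a commutative groupoid with elements r, s, t satisfying (r + s) + (r + t) = r, (r + s) + (s + t) = s, and (r + t) + (s + t) = t. Then the multisets M = ⟨r, s, t⟩ and M' = ⟨r + s, r + t, s + t⟩ satisfy deck M = deck M' = ⟨⟨r, s + t⟩, ⟨s, r + t⟩, ⟨t, r + s⟩⟩. -/
lemma filt3 : (Finset.univ.filter (fun p : Fin 3 × Fin 3 => p.1 < p.2)).val =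
    {(0,1),(0,2),(1,2)} := by decide

lemma mdeck3_s8 {G : Type*} (op : G → G → G) (m : Fin 3 → G) :
    mdeck op m = {mcard op m 0 1, mcard op m 0 2, mcard op m 1 2} := by
  rw [mdeck, filt3]; rfl

lemma mcard3 {G : Type*} (op : G → G → G) (m : Fin 3 → G) {i j k : Fin 3}
    (h : (Finset.univ.filter (fun l : Fin 3 => l ≠ i ∧ l ≠ j)).val = {k}) :
    mcard op m i j = {m k, op (m i) (m j)} := by
  rw [mcard, h]; rfl

lemma rev3 {G : Type*} (a b c : G) : ({a,b,c} : Multiset G) = {c,b,a} := by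
  refine (Multiset.cons_swap _ _ _).trans ?_
  show b ::ₘ ({a,c} : Multiset G) = c ::ₘ {b,a}
  rw [Multiset.pair_comm a c]
  exact Multiset.cons_swap _ _ _

theorem stmt8 {G : Type*} (op : G → G → G)
    (hcomm : ∀ a b : G, op a b = op b a)
    (r s t : G)
    (h1 : op (op r s) (op r t) = r) (h2 : op (op r s) (op s t) = s)
    (h3 : op (op r t) (op s t) = t) :
    mdeck op ![r, s, t] = mdeck op ![op r s, op r t, op s t] ∧
    mdeck op ![r, s, t] =
      ({({r, op s t} : Multiset G), {s, op r t}, {t, op r s}} : Multiset (Multiset G)) := by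
  have e01 : (Finset.univ.filter (fun l : Fin 3 => l ≠ 0 ∧ l ≠ 1)).val = ({2} : Multiset (Fin 3)) := by decide
  have e02 : (Finset.univ.filter (fun l : Fin 3 => l ≠ 0 ∧ l ≠ 2)).val = ({1} : Multiset (Fin 3)) := by decide
  have e12 : (Finset.univ.filter (fun l : Fin 3 => l ≠ 1 ∧ l ≠ 2)).val = ({0} : Multiset (Fin 3)) := by decide
  rw [mdeck3_s8, mdeck3_s8, mcard3 _ _ e01, mcard3 _ _ e02, mcard3 _ _ e12,
      mcard3 _ _ e01, mcard3 _ _ e02, mcard3 _ _ e12]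
  simp only [Matrix.cons_val_zero, Matrix.cons_val_one, Matrix.head_cons,
    Matrix.cons_val_two, Matrix.tail_cons]
  rw [h1, h2, h3]
  constructor
  · rw [Multiset.pair_comm t, Multiset.pair_comm s, Multiset.pair_comm r]
    exact rev3 _ _ _
  · exact rev3 _ _ _
end

section
/- Let (G, +) be a Boolean group, i.e., an abelian group in which every element satisfies x + x = 0. Then for all elements r, s, t ∈ G, the multisets ⟨r, s, t⟩ and ⟨r, r + s, r + t⟩ have the same deck. Moreover, if r ≠ 0 and r + s ≠ t, then ⟨r, s, t⟩ ≠ ⟨r, r + s, r + t⟩. -/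
theorem stmt9 {G : Type*} [AddCommGroup G] (hbool : ∀ x : G, x + x = 0)
    (r s t : G) :
    mdeck (· + ·) ![r, s, t] = mdeck (· + ·) ![r, r + s, r + t] ∧
    (r ≠ 0 → r + s ≠ t →
      ({r, s, t} : Multiset G) ≠ ({r, r + s, r + t} : Multiset G)) := by
  constructor
  · have h1 : (Finset.univ.filter (fun p : Fin 3 × Fin 3 => p.1 < p.2)).val =
        {((0:Fin 3),(1:Fin 3)), (0,2), (1,2)} := by decide
    have c01 : (Finset.univ.filter (fun k : Fin 3 => k ≠ 0 ∧ k ≠ 1)).val = {2} := by decide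
    have c02 : (Finset.univ.filter (fun k : Fin 3 => k ≠ 0 ∧ k ≠ 2)).val = {1} := by decide
    have c12 : (Finset.univ.filter (fun k : Fin 3 => k ≠ 1 ∧ k ≠ 2)).val = {0} := by decide
    have e1 : r + (r + s) = s := by rw [← add_assoc, hbool, zero_add]
    have e2 : r + (r + t) = t := by rw [← add_assoc, hbool, zero_add]
    have e3 : (r + s) + (r + t) = s + t := by
      have h : (r + s) + (r + t) = (r + r) + (s + t) := by abel
      rw [h, hbool, zero_add]
    simp only [mdeck, h1, mcard]
    simp only [Multiset.insert_eq_cons, Multiset.map_cons, Multiset.map_singleton, c01, c02, c12,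
      Matrix.cons_val_zero, Matrix.cons_val_one, Matrix.head_cons, Matrix.cons_val_two,
      Matrix.tail_cons, e1, e2, e3]
    rw [add_comm ({t} : Multiset G), add_comm ({s} : Multiset G), Multiset.cons_swap]
  · intro hr hst h
    rw [show ({r,s,t}:Multiset G) = r ::ₘ s ::ₘ {t} from rfl,
        show ({r,r+s,r+t}:Multiset G) = r ::ₘ (r+s) ::ₘ {r+t} from rfl,
        Multiset.cons_inj_right, Multiset.cons_eq_cons] at h
    rcases h with ⟨h1, _⟩ | ⟨_, cs, hcs1, _⟩
    · exact hr (by simpa using h1.symm)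
    · rw [Multiset.singleton_eq_cons_iff] at hcs1
      exact hst hcs1.1.symm
end

section
/- Let G be a non-associative semiring (a type with an additively commutative monoid structure with neutral element 0, a multiplication with unit 1, distributing over addition, and with 0 annihilating under multiplication). Let f, g : G^n → G be affine functions, say f(x_1, …, x_n) = a_1x_1 + ⋯ + a_nx_n + c and g(x_1, …, x_n) = b_1x_1 + ⋯ + b_nx_n + d. Assume that either c = d = 0 (f and g are linear) or addition in G is cancellative. Then f ≡ g if and only if the coefficient multisets satisfy ⟨a_1, …, a_n⟩ = ⟨b_1, …, b_n⟩ and c = d. -/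
open Finset

lemma aux_perm_exists {α : Type*} : ∀ {n : ℕ} (a b : Fin n → α),
    List.Perm (List.ofFn a) (List.ofFn b) → ∃ σ : Equiv.Perm (Fin n), ∀ i, a i = b (σ i) := by
  intro n
  induction n with
  | zero => intro a b _; exact ⟨Equiv.refl _, fun i => i.elim0⟩
  | succ n ih =>
    intro a b h
    have h0 : a 0 ∈ List.ofFn b := h.mem_iff.mp (by simp [List.mem_ofFn])
    rw [List.mem_ofFn] at h0
    obtain ⟨j, hj⟩ := h0
    set b' : Fin (n + 1) → α := b ∘ (Equiv.swap 0 j) with hb'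
    have hb'0 : b' 0 = a 0 := by simp [hb', Equiv.swap_apply_left, hj]
    have hperm : List.Perm (List.ofFn a) (List.ofFn b') := h.trans (Equiv.Perm.ofFn_comp_perm _ b).symm
    rw [List.ofFn_succ, List.ofFn_succ] at hperm
    rw [hb'0] at hperm
    have htail : List.Perm (List.ofFn (fun i : Fin n => a i.succ))
        (List.ofFn (fun i : Fin n => b' i.succ)) := hperm.cons_inv
    obtain ⟨σ', hσ'⟩ := ih _ _ htail
    refine ⟨(Equiv.Perm.decomposeFin.symm (0, σ')).trans (Equiv.swap 0 j), ?_⟩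
    intro i
    induction i using Fin.cases with
    | zero =>
      simp [Equiv.Perm.decomposeFin_symm_apply_zero, Equiv.swap_apply_left, hj]
    | succ i =>
      have := hσ' i
      simpa [Equiv.Perm.decomposeFin_symm_apply_succ, hb'] using this

theorem stmt13 {G : Type*} [AddCommMonoid G] [Mul G] [One G]
    (hmul_one : ∀ a : G, a * 1 = a)
    (hdist : ∀ a b c : G, (a + b) * c = a * c + b * c)
    (hzero : ∀ a : G, a * 0 = 0)
    {n : ℕ} (a b : Fin n → G) (c d : G)
    (hcase : (c = 0 ∧ d = 0) ∨ (∀ u v w : G, u + v = u + w → v = w)) :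
    (∃ σ : Equiv.Perm (Fin n),
        ∀ x : Fin n → G, (∑ i, a i * x i) + c = (∑ i, b i * x (σ i)) + d) ↔
    ((List.ofFn a : Multiset G) = (List.ofFn b : Multiset G) ∧ c = d) := by
  constructor
  · rintro ⟨σ, h⟩
    have hcd : c = d := by
      have := h (fun _ => 0)
      simpa [hzero] using this
    have hab : ∀ i, a i = b (σ.symm i) := by
      intro i
      have hx := h (fun j => if j = i then 1 else 0)
      have hL : (∑ j, a j * (if j = i then (1:G) else 0)) = a i := by
        have he : ∀ j, a j * (if j = i then (1:G) else 0) = if j = i then a j else 0 := by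
          intro j; by_cases hji : j = i <;> simp [hji, hmul_one, hzero]
        rw [Finset.sum_congr rfl (fun j _ => he j)]
        simp [Finset.sum_ite_eq']
      have hR : (∑ j, b j * (if σ j = i then (1:G) else 0)) = b (σ.symm i) := by
        have : ∀ j, b j * (if σ j = i then (1:G) else 0)
            = if j = σ.symm i then b j else 0 := by
          intro j
          by_cases hj2 : j = σ.symm i
          · subst hj2; simp [hmul_one]
          · have hne : σ j ≠ i := fun hh => hj2 (by rw [← hh, Equiv.symm_apply_apply])
            simp [hne, hj2, hzero]
        rw [Finset.sum_congr rfl (fun j _ => this j)]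
        simp [Finset.sum_ite_eq']
      rw [hL, hR] at hx
      rcases hcase with ⟨hc, hd⟩ | hcanc
      · simpa [hc, hd] using hx
      · rw [← hcd] at hx
        exact hcanc c _ _ (by rw [add_comm c, add_comm c]; exact hx)
    refine ⟨?_, hcd⟩
    have : a = b ∘ σ.symm := funext hab
    rw [this]
    exact Multiset.coe_eq_coe.mpr (Equiv.Perm.ofFn_comp_perm σ.symm b)
  · rintro ⟨hm, hcd⟩
    obtain ⟨σ, hσ⟩ := aux_perm_exists a b (Multiset.coe_eq_coe.mp hm)
    refine ⟨σ.symm, fun x => ?_⟩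
    rw [hcd]
    congr 1
    exact Fintype.sum_equiv σ _ _ (fun i => by rw [hσ i, Equiv.symm_apply_apply])
end

section
/- Let G be a non-associative semiring (a type with an additively commutative monoid structure with neutral element 0, a multiplication with unit 1, distributing over addition, and with 0 annihilating under multiplication). Let f : G^n → G, f(x_1, …, x_n) = a_1x_1 + ⋯ + a_nx_n + c, be an affine function with n ≥ 2. Then for every 2-element subset I = {i, j} of {1, …, n} with i < j, the identification minor f_I is the affine function with constant term c whose coefficient multiset is (⟨a_1, …, a_n⟩ \ ⟨a_i, a_j⟩) ⊎ ⟨a_i + a_j⟩. Consequently, the multiset ⟨C_{f_I} : I a 2-element subset of {1,…,n}⟩ of coefficient multisets of the identification minors of f equals the deck of the multiset C_f = ⟨a_1, …, a_n⟩. -/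
/-- The identification minor f_{i,j} (for i < j) of a function of arity n+1:
the j-th argument is identified with the i-th one, i.e.
f_I(x_1, …, x_n) = f(y_1, …, y_{n+1}) where y_k = x_k for k < j, y_j = x_i,
and y_k = x_{k-1} for k > j. -/
def funMinor {G : Type*} {n : ℕ} (f : (Fin (n + 1) → G) → G) (i j : Fin (n + 1))
    (hij : i < j) : (Fin n → G) → G :=
  fun x => f (fun k =>
    if hk : (k : ℕ) < (j : ℕ) then
      x ⟨(k : ℕ), by have := j.isLt; omega⟩
    else if hk' : (k : ℕ) = (j : ℕ) then
      x ⟨(i : ℕ), by have := j.isLt; have hij' : (i : ℕ) < (j : ℕ) := hij; omega⟩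
    else
      x ⟨(k : ℕ) - 1, by have := k.isLt; omega⟩)

/-- The multiset of all identification minors f_{i,j}, i < j, of f. -/
def fminors {G : Type*} {n : ℕ} (f : (Fin (n + 1) → G) → G) :
    Multiset ((Fin n → G) → G) :=
  ((Finset.univ.filter
      (fun p : Fin (n + 1) × Fin (n + 1) => p.1 < p.2)).attach.val.map
    (fun p => funMinor f p.1.1 p.1.2
      (by have h := p.2; rw [Finset.mem_filter] at h; exact h.2)))

/-- Equivalence of functions of several arguments: g is obtained from f by
permuting arguments. -/
def funEquiv {G : Type*} {m : ℕ} (f g : (Fin m → G) → G) : Prop :=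
  ∃ σ : Equiv.Perm (Fin m), ∀ x : Fin m → G, f x = g (fun i => x (σ i))

section StmtAux
variable {G : Type*}

lemma hsub_aux [DecidableEq G] [AddCommMonoid G] {n : ℕ} (a : Fin (n + 1) → G)
    (i j : Fin (n + 1)) (hij : i ≠ j) :
    (List.ofFn a : Multiset G) - {a i, a j}
      = (Finset.univ.filter (fun k : Fin (n + 1) => k ≠ i ∧ k ≠ j)).val.map a := by
  have hpair : (Finset.univ.filter (fun k : Fin (n + 1) => ¬(k ≠ i ∧ k ≠ j))) = {i, j} := by
    ext k
    simp only [Finset.mem_filter, Finset.mem_univ, true_and, Finset.mem_insert,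
      Finset.mem_singleton, not_and_or, not_not]
  have hpairval : ({i, j} : Finset (Fin (n + 1))).val = i ::ₘ {j} := by
    rw [show ({i, j} : Finset (Fin (n + 1))) = insert i {j} from rfl,
      Finset.insert_val_of_notMem (by simp [hij])]
    rfl
  have h1 : (List.ofFn a : Multiset G)
      = (Finset.univ.filter (fun k : Fin (n + 1) => k ≠ i ∧ k ≠ j)).val.map a + {a i, a j} := by
    rw [← Fin.univ_val_map a]
    conv_lhs => rw [← Multiset.filter_add_not (fun k => k ≠ i ∧ k ≠ j) Finset.univ.val]
    rw [Multiset.map_add]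
    congr 1
    rw [show Multiset.filter (fun k => ¬(k ≠ i ∧ k ≠ j)) Finset.univ.val
          = (Finset.univ.filter (fun k : Fin (n + 1) => ¬(k ≠ i ∧ k ≠ j))).val from
          (Finset.filter_val _ _).symm, hpair, hpairval]
    simp [Multiset.map_cons, Multiset.insert_eq_cons]
  rw [h1, add_tsub_cancel_right]

/-- The index map underlying the identification minor. -/
def pidx {n : ℕ} (i j : Fin (n + 1)) (hij : i < j) : Fin (n + 1) → Fin n := fun k =>
  if hk : (k : ℕ) < (j : ℕ) then
    ⟨(k : ℕ), by have := j.isLt; omega⟩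
  else if hk' : (k : ℕ) = (j : ℕ) then
    ⟨(i : ℕ), by have := j.isLt; have hij' : (i : ℕ) < (j : ℕ) := hij; omega⟩
  else
    ⟨(k : ℕ) - 1, by have := k.isLt; omega⟩

lemma funMinor_eq {n : ℕ} (f : (Fin (n + 1) → G) → G) (i j : Fin (n + 1)) (hij : i < j)
    (x : Fin n → G) : funMinor f i j hij x = f (fun k => x (pidx i j hij k)) := by
  unfold funMinor pidx
  congr 1
  funext m
  by_cases h1 : (m : ℕ) < (j : ℕ)
  · rw [dif_pos h1, dif_pos h1]
  · rw [dif_neg h1, dif_neg h1]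
    by_cases h2 : (m : ℕ) = (j : ℕ)
    · rw [dif_pos h2, dif_pos h2]
    · rw [dif_neg h2, dif_neg h2]

lemma pidx_self {n : ℕ} (i j : Fin (n + 1)) (hij : i < j) (h : (i : ℕ) < n) :
    pidx i j hij j = ⟨(i : ℕ), h⟩ := by
  unfold pidx
  rw [dif_neg (lt_irrefl _), dif_pos rfl]

lemma pidx_succAbove {n : ℕ} (i j : Fin (n + 1)) (hij : i < j) (k : Fin n) :
    pidx i j hij (j.succAbove k) = k := by
  unfold pidx
  rcases lt_or_ge ((k : ℕ)) ((j : ℕ)) with h | h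
  · rw [Fin.succAbove_of_castSucc_lt _ _ (by simpa [Fin.lt_def] using h)]
    simp only [Fin.coe_castSucc]
    rw [dif_pos h]
  · rw [Fin.succAbove_of_le_castSucc _ _ (by simpa [Fin.le_def] using h)]
    simp only [Fin.val_succ]
    rw [dif_neg (by omega), dif_neg (by omega)]
    simp

end StmtAux

theorem stmt14 {G : Type*} [AddCommMonoid G] [Mul G] [One G] [DecidableEq G]
    (hmul_one : ∀ a : G, a * 1 = a)
    (hdist : ∀ a b c : G, (a + b) * c = a * c + b * c)
    (hzero : ∀ a : G, a * 0 = 0)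
    {n : ℕ} (hn : 1 ≤ n)
    (a : Fin (n + 1) → G) (c : G)
    (f : (Fin (n + 1) → G) → G)
    (hf : ∀ x : Fin (n + 1) → G, f x = (∑ i, a i * x i) + c) :
    (∀ (i j : Fin (n + 1)) (hij : i < j),
      ∃ b : Fin n → G,
        (∀ x : Fin n → G, funMinor f i j hij x = (∑ k, b k * x k) + c) ∧
        (List.ofFn b : Multiset G)
          = ((List.ofFn a : Multiset G) - {a i, a j}) + {a i + a j}) ∧
    ((Finset.univ.filter
        (fun p : Fin (n + 1) × Fin (n + 1) => p.1 < p.2)).val.map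
      (fun p => ((List.ofFn a : Multiset G) - {a p.1, a p.2}) + {a p.1 + a p.2}))
      = mdeck (· + ·) a := by
  have hlti : ∀ (i j : Fin (n + 1)), i < j → (i : ℕ) < n := fun i j hij => by
    have h1 : (i : ℕ) < (j : ℕ) := hij
    have := j.isLt; omega
  constructor
  · intro i j hij
    have hijn : (i : ℕ) < (j : ℕ) := hij
    have hin : (i : ℕ) < n := hlti i j hij
    set i' : Fin n := ⟨(i : ℕ), hin⟩ with hi'def
    have hcast : Fin.castSucc i' = i := by ext; simp [hi'def]
    have hsucci : j.succAbove i' = i := by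
      rw [Fin.succAbove_of_castSucc_lt _ _ (by rw [hcast]; exact hij)]
      exact hcast
    set b : Fin n → G := fun k => if k = i' then a i + a j else a (j.succAbove k) with hbdef
    refine ⟨b, ?_, ?_⟩
    · intro x
      rw [funMinor_eq, hf, Fin.sum_univ_succAbove (fun m => a m * x (pidx i j hij m)) j]
      rw [pidx_self i j hij hin]
      have hterm : ∀ k : Fin n,
          a (j.succAbove k) * x (pidx i j hij (j.succAbove k)) = a (j.succAbove k) * x k :=
        fun k => by rw [pidx_succAbove]
      rw [Finset.sum_congr rfl (fun k _ => hterm k)]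
      have hrhs : ∑ k, b k * x k
          = ∑ k, (a (j.succAbove k) * x k + if k = i' then a j * x k else 0) := by
        refine Finset.sum_congr rfl (fun k _ => ?_)
        by_cases hk : k = i'
        · subst hk
          rw [if_pos rfl, hbdef]
          simp only [if_pos rfl]
          rw [hsucci]
          exact hdist _ _ _
        · rw [if_neg hk, hbdef]
          simp only [if_neg hk, add_zero]
      rw [hrhs, Finset.sum_add_distrib, Finset.sum_ite_eq' Finset.univ i' (fun k => a j * x k),
        if_pos (Finset.mem_univ _)]
      rw [add_comm (a j * x i')]
    · rw [hsub_aux a i j (ne_of_lt hij), ← Fin.univ_val_map b]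
      have huniv : (Finset.univ : Finset (Fin n)).val = i' ::ₘ (Finset.univ.erase i').val := by
        rw [← Finset.insert_val_of_notMem (Finset.notMem_erase i' _),
          Finset.insert_erase (Finset.mem_univ _)]
      have himg : (Finset.univ.erase i').map j.succAboveEmb
          = Finset.univ.filter (fun k : Fin (n + 1) => k ≠ i ∧ k ≠ j) := by
        ext m
        simp only [Finset.mem_map, Finset.mem_erase, Finset.mem_univ, and_true,
          Finset.mem_filter, true_and, Fin.succAboveEmb_apply]
        constructor
        · rintro ⟨k, hk, rfl⟩
          refine ⟨fun hcon => hk ?_, Fin.succAbove_ne j k⟩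
          rw [← hsucci] at hcon
          exact Fin.succAbove_right_injective hcon
        · rintro ⟨hmi, hmj⟩
          obtain ⟨k, hk⟩ := Fin.exists_succAbove_eq hmj
          exact ⟨k, fun hcon => hmi (by rw [← hk, hcon, hsucci]), hk⟩
      have hmapb : Multiset.map b (Finset.univ.erase i').val
          = Multiset.map a ((Finset.univ.erase i').val.map j.succAbove) := by
        rw [Multiset.map_map]
        refine Multiset.map_congr rfl (fun k hk => ?_)
        have hk' : k ≠ i' := (Finset.mem_erase.mp (Finset.mem_val.mp hk)).1
        rw [hbdef]
        simp only [if_neg hk', Function.comp_apply]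
      rw [huniv, Multiset.map_cons, hmapb]
      have : (Finset.univ.erase i').val.map j.succAbove
          = (Finset.univ.filter (fun k : Fin (n + 1) => k ≠ i ∧ k ≠ j)).val := by
        rw [← himg, Finset.map_val]
        rfl
      rw [this, hbdef]
      rw [← Multiset.singleton_add, add_comm]
      simp
  · unfold mdeck mcard
    refine Multiset.map_congr rfl (fun p hp => ?_)
    have hlt : p.1 < p.2 := (Finset.mem_filter.mp hp).2
    rw [hsub_aux a p.1 p.2 (ne_of_lt hlt)]
end

section
/- Let G be a non-associative semiring (a type with an additively commutative monoid structure with neutral element 0, a multiplication with unit 1, distributing over addition, and with 0 annihilating under multiplication), and let f, g : G^n → G be affine functions with n ≥ 4. If f and g are linear, or if addition in G is cancellative, then deck f = deck g if and only if f ≡ g. -/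
open Finset

set_option linter.unusedSectionVars false
set_option linter.unusedTactic false
set_option maxHeartbeats 1000000
section AuxAll

section Core
variable {M : Type*} [AddCommMonoid M] [DecidableEq M]


def pairsF (m : ℕ) : Finset (Fin m × Fin m) :=
  Finset.univ.filter (fun p : Fin m × Fin m => p.1 < p.2)

def cardC {m : ℕ} (a : Fin m → M) (i j : Fin m) : Multiset M :=
  (a i + a j) ::ₘ ((Finset.univ.val.erase i).erase j).map a

def deckC {m : ℕ} (a : Fin m → M) : Multiset (Multiset M) :=
  (pairsF m).val.map (fun p => cardC a p.1 p.2)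

def NA {m : ℕ} (a : Fin m → M) (z : M) : ℕ := Multiset.count z (Finset.univ.val.map a)

def PA {m : ℕ} (a : Fin m → M) (z : M) : ℕ :=
  Multiset.count z ((pairsF m).val.map (fun p => a p.1 + a p.2))

def pairSums (C : Multiset M) : Multiset M := C.bind (fun u => C.map (u + ·))

def OPc (z : M) (C : Multiset M) : ℕ := Multiset.count z (pairSums C)

def DGc (z : M) (C : Multiset M) : ℕ := Multiset.count z (C.map (fun u => u + u))

lemma split_sum {m : ℕ} (F : Fin m × Fin m → ℕ) :
    ∑ p : Fin m × Fin m, F p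
      = ∑ p ∈ pairsF m, F p + (∑ p ∈ pairsF m, F p.swap + ∑ i : Fin m, F (i, i)) := by
  classical
  have h1 := Finset.sum_filter_add_sum_filter_not Finset.univ
    (fun p : Fin m × Fin m => p.1 < p.2) F
  have h2 := Finset.sum_filter_add_sum_filter_not
    (Finset.univ.filter (fun p : Fin m × Fin m => ¬ p.1 < p.2))
    (fun p : Fin m × Fin m => p.2 < p.1) F
  rw [Finset.filter_filter, Finset.filter_filter] at h2
  have e1 : ∑ p ∈ Finset.univ.filter (fun p : Fin m × Fin m => ¬p.1 < p.2 ∧ p.2 < p.1), F p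
      = ∑ p ∈ pairsF m, F p.swap := by
    apply Finset.sum_nbij' (fun p => p.swap) (fun p => p.swap) <;>
      simp +contextual [pairsF, Prod.ext_iff, le_of_lt]
  have e2 : ∑ p ∈ Finset.univ.filter (fun p : Fin m × Fin m => ¬p.1 < p.2 ∧ ¬p.2 < p.1), F p
      = ∑ i : Fin m, F (i, i) := by
    apply Finset.sum_nbij' (fun p => p.1) (fun i => (i, i))
    · simp
    · simp
    · intro p hp
      simp only [Finset.mem_filter] at hp
      have h : p.1 = p.2 := le_antisymm (le_of_not_gt hp.2.2) (le_of_not_gt hp.2.1)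
      exact Prod.ext rfl h
    · intro i _; rfl
    · intro p hp
      simp only [Finset.mem_filter] at hp
      have h : p.1 = p.2 := le_antisymm (le_of_not_gt hp.2.2) (le_of_not_gt hp.2.1)
      rw [show (p.1, p.1) = p from Prod.ext rfl h]
  rw [e1, e2] at h2
  rw [← h1, ← h2]
  rfl

lemma L1 {m : ℕ} (χ : Fin m → ℕ) :
    (∑ p ∈ pairsF m, (χ p.1 + χ p.2)) + ∑ i, χ i = m * ∑ i, χ i := by
  classical
  have hs := split_sum (fun p : Fin m × Fin m => χ p.1)
  have ht := split_sum (fun p : Fin m × Fin m => χ p.2)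
  have hu : ∑ p : Fin m × Fin m, χ p.1 = m * ∑ i, χ i := by
    rw [← Finset.univ_product_univ, Finset.sum_product]
    rw [Finset.mul_sum]
    refine Finset.sum_congr rfl (fun i _ => ?_)
    simp [Finset.sum_const, Finset.card_univ, mul_comm]
  have hv : ∑ p : Fin m × Fin m, χ p.2 = m * ∑ i, χ i := by
    rw [← Finset.univ_product_univ, Finset.sum_product, Finset.sum_comm]
    rw [Finset.mul_sum]
    refine Finset.sum_congr rfl (fun i _ => ?_)
    simp [Finset.sum_const, Finset.card_univ, mul_comm]
  simp only [Prod.fst_swap, Prod.snd_swap] at hs ht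
  simp only [Finset.sum_add_distrib] at hs ht ⊢
  omega

lemma two_Pm {m : ℕ} : 2 * (pairsF m).card + m = m * m := by
  classical
  have h := L1 (m := m) (fun _ => 1)
  have h1 : (∑ _p ∈ pairsF m, (1 + 1)) = 2 * (pairsF m).card := by
    rw [Finset.sum_const, smul_eq_mul]; ring
  have h2 : (∑ _i : Fin m, 1) = m := by simp
  rw [h1, h2] at h
  omega

lemma hNA_sum {m : ℕ} (a : Fin m → M) (z : M) :
    ∑ i : Fin m, (if z = a i then 1 else 0) = NA a z := by
  rw [NA, Multiset.count_map]
  rw [show Multiset.filter (fun i => z = a i) Finset.univ.val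
      = (Finset.univ.filter (fun i => z = a i)).val from rfl]
  rw [← Finset.card_def]
  simp [Finset.sum_boole]

lemma hPA_sum {m : ℕ} (a : Fin m → M) (z : M) :
    ∑ p ∈ pairsF m, (if z = a p.1 + a p.2 then 1 else 0) = PA a z := by
  rw [PA, Multiset.count_map]
  rw [show Multiset.filter (fun p => z = a p.1 + a p.2) (pairsF m).val
      = ((pairsF m).filter (fun p => z = a p.1 + a p.2)).val from rfl]
  rw [← Finset.card_def]
  simp [Finset.sum_boole]

lemma hrest {m : ℕ} (a : Fin m → M) (z : M) {p : Fin m × Fin m} (hp : p ∈ pairsF m) :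
    Multiset.count z (((Finset.univ.val.erase p.1).erase p.2).map a)
      + ((if z = a p.1 then 1 else 0) + (if z = a p.2 then 1 else 0)) = NA a z := by
  have hlt : p.1 < p.2 := by simpa [pairsF] using hp
  have h2 : p.2 ∈ Finset.univ.val.erase p.1 :=
    (Multiset.Nodup.mem_erase_iff Finset.univ.nodup).2 ⟨Fin.ne_of_gt hlt, by simp⟩
  have e : Finset.univ.val = p.1 ::ₘ p.2 ::ₘ ((Finset.univ.val.erase p.1).erase p.2) := by
    rw [Multiset.cons_erase h2, Multiset.cons_erase (Finset.mem_univ p.1 : p.1 ∈ Finset.univ)]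
  rw [NA]
  conv_rhs => rw [e]
  simp only [Multiset.map_cons, Multiset.count_cons]
  ring

lemma sideEq {m : ℕ} (a : Fin m → M) (z : M) :
    (∑ p ∈ pairsF m, Multiset.count z (cardC a p.1 p.2)) + m * NA a z
      = PA a z + (pairsF m).card * NA a z + NA a z := by
  have h1 : ∀ p ∈ pairsF m, Multiset.count z (cardC a p.1 p.2)
      = Multiset.count z (((Finset.univ.val.erase p.1).erase p.2).map a)
        + (if z = a p.1 + a p.2 then 1 else 0) := by
    intro p _; rw [cardC, Multiset.count_cons]
  rw [Finset.sum_congr rfl h1, Finset.sum_add_distrib, hPA_sum]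
  have hL := L1 (m := m) (fun i => if z = a i then 1 else 0)
  rw [hNA_sum] at hL
  have h2 : ∀ p ∈ pairsF m,
      (Multiset.count z (((Finset.univ.val.erase p.1).erase p.2).map a))
        + ((if z = a p.1 then 1 else 0) + (if z = a p.2 then 1 else 0)) = NA a z :=
    fun p hp => hrest a z hp
  have h3 : (∑ p ∈ pairsF m, (Multiset.count z (((Finset.univ.val.erase p.1).erase p.2).map a)
        + ((if z = a p.1 then 1 else 0) + (if z = a p.2 then 1 else 0))))
      = (pairsF m).card * NA a z := by
    rw [Finset.sum_congr rfl h2, Finset.sum_const, smul_eq_mul]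
  rw [Finset.sum_add_distrib] at h3
  omega

lemma C1 {m : ℕ} {a b : Fin m → M} (h : deckC a = deckC b) (z : M) :
    PA a z + (pairsF m).card * NA a z + NA a z + m * NA b z
      = PA b z + (pairsF m).card * NA b z + NA b z + m * NA a z := by
  have hs : (∑ p ∈ pairsF m, Multiset.count z (cardC a p.1 p.2))
      = ∑ p ∈ pairsF m, Multiset.count z (cardC b p.1 p.2) := by
    have h2 : ((deckC a).map (Multiset.count z)).sum = ((deckC b).map (Multiset.count z)).sum := by
      rw [h]
    simp only [deckC, Multiset.map_map] at h2
    exact h2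
  have ha := sideEq a z
  have hb := sideEq b z
  rw [hs] at ha
  omega

lemma count_map_eq_sum {ι : Type*} (s : Finset ι) (f : ι → M) (z : M) :
    Multiset.count z (s.val.map f) = ∑ i ∈ s, (if z = f i then 1 else 0) := by
  rw [Multiset.count_map]
  rw [show Multiset.filter (fun i => z = f i) s.val = (s.filter (fun i => z = f i)).val from rfl]
  rw [← Finset.card_def]
  simp [Finset.sum_boole]

lemma PV {m : ℕ} (a : Fin m → M) (z : M) :
    2 * PA a z + DGc z (Finset.univ.val.map a) = OPc z (Finset.univ.val.map a) := by
  have hOP : OPc z (Finset.univ.val.map a)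
      = ∑ p : Fin m × Fin m, (if z = a p.1 + a p.2 then 1 else 0) := by
    rw [OPc, pairSums, Multiset.bind_map, Multiset.count_bind]
    have : ∀ i : Fin m, Multiset.count z ((Finset.univ.val.map a).map (a i + ·))
        = ∑ j : Fin m, (if z = a i + a j then 1 else 0) := by
      intro i
      rw [Multiset.map_map]
      exact count_map_eq_sum Finset.univ _ z
    rw [show (Multiset.map (fun i => Multiset.count z ((Finset.univ.val.map a).map (a i + ·)))
          Finset.univ.val).sum
        = ∑ i : Fin m, Multiset.count z ((Finset.univ.val.map a).map (a i + ·)) from rfl]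
    rw [← Finset.univ_product_univ, Finset.sum_product]
    exact Finset.sum_congr rfl (fun i _ => this i)
  have hsplit := split_sum (fun p : Fin m × Fin m => if z = a p.1 + a p.2 then 1 else 0)
  have hswap : ∑ p ∈ pairsF m, (if z = a p.swap.1 + a p.swap.2 then 1 else 0)
      = ∑ p ∈ pairsF m, (if z = a p.1 + a p.2 then 1 else 0) := by
    refine Finset.sum_congr rfl (fun p _ => ?_)
    simp only [Prod.fst_swap, Prod.snd_swap]
    exact if_congr (by rw [add_comm]) rfl rfl
  have hPA : ∑ p ∈ pairsF m, (if z = a p.1 + a p.2 then 1 else 0) = PA a z :=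
    (count_map_eq_sum (pairsF m) (fun p => a p.1 + a p.2) z).symm
  have hDG : ∑ i : Fin m, (if z = a i + a i then 1 else 0) = DGc z (Finset.univ.val.map a) := by
    rw [DGc, Multiset.map_map]
    exact (count_map_eq_sum Finset.univ (fun i => a i + a i) z).symm
  rw [hOP, hsplit, hswap, hPA, hDG]
  ring

lemma OP_cons (z : M) (u : M) (C : Multiset M) :
    OPc z (u ::ₘ C)
      = OPc z C + (2 * Multiset.count z (C.map (u + ·)) + if z = u + u then 1 else 0) := by
  rw [OPc, pairSums, Multiset.cons_bind]
  have h1 : (u ::ₘ C).map (u + ·) = (u + u) ::ₘ C.map (u + ·) := by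
    rw [Multiset.map_cons]
  have h2 : C.bind (fun v => (u ::ₘ C).map (v + ·))
      = C.map (fun v => v + u) + C.bind (fun v => C.map (v + ·)) := by
    have : ∀ v ∈ C, (u ::ₘ C).map (v + ·) = (v + u) ::ₘ C.map (v + ·) := by
      intro v _; rw [Multiset.map_cons]
    rw [Multiset.bind_congr this, Multiset.bind_cons]
  rw [h1, h2]
  have h3 : Multiset.count z (C.map (fun v => v + u)) = Multiset.count z (C.map (u + ·)) := by
    refine congrArg _ (Multiset.map_congr rfl (fun v _ => ?_))
    exact add_comm v u
  simp only [Multiset.count_add, Multiset.count_cons]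
  rw [h3, OPc, pairSums]
  ring

lemma DG_cons (z : M) (u : M) (C : Multiset M) :
    DGc z (u ::ₘ C) = DGc z C + (if z = u + u then 1 else 0) := by
  rw [DGc, Multiset.map_cons, Multiset.count_cons, DGc]

lemma sum_count_le_s15 (s : Multiset M) (t : Finset M) :
    ∑ z ∈ t, s.count z ≤ Multiset.card s := by
  have h1 : ∑ z ∈ t, s.count z ≤ ∑ z ∈ t ∪ s.toFinset, s.count z :=
    Finset.sum_le_sum_of_subset Finset.subset_union_left
  have h2 : ∑ z ∈ t ∪ s.toFinset, s.count z = ∑ z ∈ s.toFinset, s.count z := by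
    refine (Finset.sum_subset Finset.subset_union_right (fun z _ hz => ?_)).symm
    exact Multiset.count_eq_zero.2 (fun hm => hz (Multiset.mem_toFinset.2 hm))
  rw [h2, Multiset.toFinset_sum_count_eq] at h1
  exact h1

lemma existsPerm {m : ℕ} {a b : Fin m → M}
    (h : Finset.univ.val.map a = Finset.univ.val.map b) :
    ∃ σ : Equiv.Perm (Fin m), ∀ i, b (σ i) = a i := by
  classical
  have key : ∀ (f : Fin m → M) (z : M), Multiset.count z (Finset.univ.val.map f)
      = (Finset.univ.filter (fun i => f i = z)).card := by
    intro f z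
    rw [Multiset.count_map]
    rw [show Multiset.filter (fun i => z = f i) Finset.univ.val
        = (Finset.univ.filter (fun i => z = f i)).val from rfl]
    rw [← Finset.card_def]
    congr 1
    exact Finset.filter_congr (fun x _ => eq_comm)
  have hcard : ∀ z : M, Fintype.card {i // a i = z} = Fintype.card {j // b j = z} := by
    intro z
    rw [Fintype.card_subtype, Fintype.card_subtype, ← key a z, ← key b z, h]
  let e : ∀ z : M, {i // a i = z} ≃ {j // b j = z} := fun z => Fintype.equivOfCardEq (hcard z)
  refine ⟨(Equiv.sigmaFiberEquiv a).symm.trans ((Equiv.sigmaCongrRight e).trans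
    (Equiv.sigmaFiberEquiv b)), fun i => ?_⟩
  simp only [Equiv.trans_apply, Equiv.sigmaFiberEquiv, Equiv.sigmaCongrRight,
    Equiv.coe_fn_symm_mk, Equiv.coe_fn_mk]
  exact (e (a i) ⟨i, rfl⟩).2

lemma cardC_comm {m : ℕ} (a : Fin m → M) (i j : Fin m) : cardC a i j = cardC a j i := by
  rw [cardC, cardC, add_comm, Multiset.erase_comm]

lemma univ_map_perm {m : ℕ} (σ : Equiv.Perm (Fin m)) :
    Finset.univ.val.map ⇑σ = Finset.univ.val := by
  have h := Finset.map_univ_equiv σ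
  have := congrArg Finset.val h
  rwa [Finset.map_val] at this

lemma cardC_comp {m : ℕ} (a : Fin m → M) (σ : Equiv.Perm (Fin m)) (i j : Fin m) :
    cardC (a ∘ σ) i j = cardC a (σ i) (σ j) := by
  rw [cardC, cardC]
  congr 1
  have : ((Finset.univ.val.erase i).erase j).map (a ∘ ⇑σ)
      = (((Finset.univ.val.erase i).erase j).map ⇑σ).map a := by
    rw [Multiset.map_map]
  rw [this, Multiset.map_erase _ σ.injective, Multiset.map_erase _ σ.injective, univ_map_perm]

lemma deckC_comp {m : ℕ} (a : Fin m → M) (σ : Equiv.Perm (Fin m)) :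
    deckC (a ∘ σ) = deckC a := by
  classical
  set g : Fin m × Fin m → Fin m × Fin m :=
    fun p => if σ p.1 < σ p.2 then (σ p.1, σ p.2) else (σ p.2, σ p.1) with hg
  have hmapsto : ∀ p ∈ pairsF m, g p ∈ pairsF m := by
    intro p hp
    have hlt : p.1 < p.2 := by simpa [pairsF] using hp
    by_cases hc : σ p.1 < σ p.2
    · simp [hg, hc, pairsF]
    · have hne : σ p.1 ≠ σ p.2 := fun he => absurd (σ.injective he) (Fin.ne_of_lt hlt)
      have : σ p.2 < σ p.1 := lt_of_le_of_ne (le_of_not_gt hc) hne.symm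
      simp [hg, hc, pairsF, this]
  have hinj : Set.InjOn g (pairsF m) := by
    intro p hp q hq he
    have hp' : p.1 < p.2 := by simpa [pairsF] using hp
    have hq' : q.1 < q.2 := by simpa [pairsF] using hq
    by_cases hc1 : σ p.1 < σ p.2 <;> by_cases hc2 : σ q.1 < σ q.2 <;>
      simp only [hg, if_pos, if_neg, hc1, hc2, if_true, if_false, Prod.mk.injEq,
        Prod.ext_iff] at he ⊢
    · exact ⟨σ.injective he.1, σ.injective he.2⟩
    all_goals try (
      exfalso
      have e1 := σ.injective he.1
      have e2 := σ.injective he.2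
      first
      | (rw [← e1, ← e2] at hq'; exact absurd hq' (not_lt_of_gt hp'))
      | (rw [← e2, ← e1] at hq'; exact absurd hq' (not_lt_of_gt hp')))
    · exact ⟨σ.injective he.2, σ.injective he.1⟩
  have himg : (pairsF m).image g = pairsF m := by
    apply Finset.eq_of_subset_of_card_le
    · intro q hq
      rcases Finset.mem_image.mp hq with ⟨p, hp, rfl⟩
      exact hmapsto p hp
    · rw [Finset.card_image_of_injOn hinj]
  have hval : (pairsF m).val.map g = (pairsF m).val := by
    rw [← Finset.image_val_of_injOn hinj, himg]
  calc deckC (a ∘ σ) = (pairsF m).val.map (fun p => cardC (a ∘ σ) p.1 p.2) := rfl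
    _ = (pairsF m).val.map ((fun q => cardC a q.1 q.2) ∘ g) := by
        apply Multiset.map_congr rfl
        intro p hp
        rw [cardC_comp]
        by_cases hc : σ p.1 < σ p.2
        · simp [hg, hc]
        · simp only [hg, if_neg hc, Function.comp_apply]
          exact cardC_comm a (σ p.1) (σ p.2)
    _ = ((pairsF m).val.map g).map (fun q => cardC a q.1 q.2) := by rw [Multiset.map_map]
    _ = deckC a := by rw [hval]; rfl

lemma ite01_le {p : Prop} [Decidable p] : (if p then (1:ℕ) else 0) ≤ 1 := by
  split <;> omega

lemma pair_excl {z1 z2 u : M} (h : z1 ≠ z2) :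
    (if z1 = u then (1:ℕ) else 0) + (if z2 = u then 1 else 0) ≤ 1 := by
  split_ifs with h1 h2
  · exact absurd (h1.trans h2.symm) h
  all_goals omega

lemma huniv4 : (Finset.univ.val : Multiset (Fin 4)) = {0, 1, 2, 3} := by decide

lemma hpairs4 : (pairsF 4).val
    = {((0:Fin 4),(1:Fin 4)), (0,2), (0,3), (1,2), (1,3), (2,3)} := by decide

lemma hcard6 : (pairsF 4).card = 6 := by decide

/-- replace `a` by an explicitly reordered tuple with the same deck -/

lemma reorder {a : Fin 4 → M} (a' : Fin 4 → M)
    (h : Finset.univ.val.map a' = Finset.univ.val.map a) :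
    deckC a' = deckC a := by
  obtain ⟨σ, hσ⟩ := existsPerm h
  have : a' = a ∘ σ := funext (fun i => (hσ i).symm)
  rw [this, deckC_comp]

lemma m4_e2 {a b : Fin 4 → M} (h : deckC a = deckC b) {D : Multiset M} {x1 x2 y1 y2 : M}
    (hA : Finset.univ.val.map a = D + {x1, x2}) (hB : Finset.univ.val.map b = D + {y1, y2})
    (hD : Multiset.card D = 2)
    (hx1 : x1 ≠ y1 ∧ x1 ≠ y2) (hx2 : x2 ≠ y1 ∧ x2 ≠ y2) : False := by
  classical
  obtain ⟨d1, d2, hD2⟩ := Multiset.card_eq_two.1 hD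
  subst hD2
  have hA' : Finset.univ.val.map ![d1, d2, x1, x2] = Finset.univ.val.map a := by
    rw [hA, huniv4]
    refine Multiset.ext.2 (fun z => ?_)
    simp only [Multiset.insert_eq_cons, Multiset.map_cons, Multiset.map_singleton,
      Multiset.count_cons, Multiset.count_singleton, Multiset.count_add,
      Matrix.cons_val_zero, Matrix.cons_val_one, Matrix.head_cons, Matrix.cons_val_two,
      Matrix.tail_cons, Matrix.cons_val_three]
    omega
  have hB' : Finset.univ.val.map ![d1, d2, y1, y2] = Finset.univ.val.map b := by
    rw [hB, huniv4]
    refine Multiset.ext.2 (fun z => ?_)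
    simp only [Multiset.insert_eq_cons, Multiset.map_cons, Multiset.map_singleton,
      Multiset.count_cons, Multiset.count_singleton, Multiset.count_add,
      Matrix.cons_val_zero, Matrix.cons_val_one, Matrix.head_cons, Matrix.cons_val_two,
      Matrix.tail_cons, Matrix.cons_val_three]
    omega
  have hdeck' : deckC ![d1, d2, x1, x2] = deckC ![d1, d2, y1, y2] := by
    rw [reorder _ hA', reorder _ hB', h]
  by_cases h12 : x1 = x2
  · subst h12
    have h1 := C1 hdeck' x1
    rw [hcard6] at h1
    simp only [NA, PA, huniv4, hpairs4, Multiset.insert_eq_cons, Multiset.map_cons,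
      Multiset.map_singleton, Multiset.count_cons, Multiset.count_singleton,
      Multiset.count_zero, Matrix.cons_val_zero, Matrix.cons_val_one,
      Matrix.head_cons, Matrix.cons_val_two, Matrix.tail_cons, Matrix.cons_val_three,
      hx1.1, hx1.2, if_true, if_false, eq_self_iff_true, ite_true, ite_false] at h1
    have e1 := ite01_le (p := x1 = d1 + y1)
    have e2 := ite01_le (p := x1 = d1 + y2)
    have e3 := ite01_le (p := x1 = d2 + y1)
    have e4 := ite01_le (p := x1 = d2 + y2)
    have e5 := ite01_le (p := x1 = y1 + y2)
    omega
  · have h1 := C1 hdeck' x1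
    have h2 := C1 hdeck' x2
    rw [hcard6] at h1 h2
    simp only [NA, PA, huniv4, hpairs4, Multiset.insert_eq_cons, Multiset.map_cons,
      Multiset.map_singleton, Multiset.count_cons, Multiset.count_singleton,
      Multiset.count_zero, Matrix.cons_val_zero, Matrix.cons_val_one,
      Matrix.head_cons, Matrix.cons_val_two, Matrix.tail_cons, Matrix.cons_val_three,
      hx1.1, hx1.2, hx2.1, hx2.2, h12, Ne.symm h12, if_true, if_false,
      eq_self_iff_true, ite_true, ite_false] at h1 h2
    have e1 := pair_excl (z1 := x1) (z2 := x2) (u := d1 + y1) h12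
    have e2 := pair_excl (z1 := x1) (z2 := x2) (u := d1 + y2) h12
    have e3 := pair_excl (z1 := x1) (z2 := x2) (u := d2 + y1) h12
    have e4 := pair_excl (z1 := x1) (z2 := x2) (u := d2 + y2) h12
    have e5 := pair_excl (z1 := x1) (z2 := x2) (u := y1 + y2) h12
    omega

lemma hE01 : ((Finset.univ.val.erase (0:Fin 4)).erase 1) = {2, 3} := by decide

lemma hE02 : ((Finset.univ.val.erase (0:Fin 4)).erase 2) = {1, 3} := by decide

lemma hE03 : ((Finset.univ.val.erase (0:Fin 4)).erase 3) = {1, 2} := by decide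

lemma hE12 : ((Finset.univ.val.erase (1:Fin 4)).erase 2) = {0, 3} := by decide

lemma hE13 : ((Finset.univ.val.erase (1:Fin 4)).erase 3) = {0, 2} := by decide

lemma hE23 : ((Finset.univ.val.erase (2:Fin 4)).erase 3) = {0, 1} := by decide

lemma m4_e1 {a b : Fin 4 → M} (h : deckC a = deckC b) {D : Multiset M} {x y : M}
    (hA : Finset.univ.val.map a = D + {x}) (hB : Finset.univ.val.map b = D + {y})
    (hD : Multiset.card D = 3) (hxy : x ≠ y) : False := by
  classical
  obtain ⟨d1, d2, d3, hD3⟩ := Multiset.card_eq_three.1 hD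
  subst hD3
  have hA' : Finset.univ.val.map ![d1, d2, d3, x] = Finset.univ.val.map a := by
    rw [hA, huniv4]
    refine Multiset.ext.2 (fun z => ?_)
    simp only [Multiset.insert_eq_cons, Multiset.map_cons, Multiset.map_singleton,
      Multiset.count_cons, Multiset.count_singleton, Multiset.count_add,
      Matrix.cons_val_zero, Matrix.cons_val_one, Matrix.head_cons, Matrix.cons_val_two,
      Matrix.tail_cons, Matrix.cons_val_three]
    omega
  have hB' : Finset.univ.val.map ![d1, d2, d3, y] = Finset.univ.val.map b := by
    rw [hB, huniv4]
    refine Multiset.ext.2 (fun z => ?_)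
    simp only [Multiset.insert_eq_cons, Multiset.map_cons, Multiset.map_singleton,
      Multiset.count_cons, Multiset.count_singleton, Multiset.count_add,
      Matrix.cons_val_zero, Matrix.cons_val_one, Matrix.head_cons, Matrix.cons_val_two,
      Matrix.tail_cons, Matrix.cons_val_three]
    omega
  have hdeck' : deckC ![d1, d2, d3, x] = deckC ![d1, d2, d3, y] := by
    rw [reorder _ hA', reorder _ hB', h]
  have h1 := C1 hdeck' x
  have h2 := C1 hdeck' y
  rw [hcard6] at h1 h2
  simp only [NA, PA, huniv4, hpairs4, Multiset.insert_eq_cons, Multiset.map_cons,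
    Multiset.map_singleton, Multiset.count_cons, Multiset.count_singleton,
    Multiset.count_zero, Matrix.cons_val_zero, Matrix.cons_val_one,
    Matrix.head_cons, Matrix.cons_val_two, Matrix.tail_cons, Matrix.cons_val_three,
    hxy, Ne.symm hxy, if_true, if_false, eq_self_iff_true, ite_true, ite_false] at h1 h2
  -- bounds
  have b1 := ite01_le (p := x = d1 + y)
  have b2 := ite01_le (p := x = d2 + y)
  have b3 := ite01_le (p := x = d3 + y)
  have b4 := ite01_le (p := x = d1 + x)
  have b5 := ite01_le (p := x = d2 + x)
  have b6 := ite01_le (p := x = d3 + x)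
  have c1 := ite01_le (p := y = d1 + x)
  have c2 := ite01_le (p := y = d2 + x)
  have c3 := ite01_le (p := y = d3 + x)
  have c4 := ite01_le (p := y = d1 + y)
  have c5 := ite01_le (p := y = d2 + y)
  have c6 := ite01_le (p := y = d3 + y)
  -- extracted relations
  have f1 : d1 + y = x := by
    by_contra hc; have h1' := h1; rw [if_neg (fun hh : x = d1 + y => hc hh.symm)] at h1'; omega
  have f2 : d2 + y = x := by
    by_contra hc; have h1' := h1; rw [if_neg (fun hh : x = d2 + y => hc hh.symm)] at h1'; omega
  have f3 : d3 + y = x := by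
    by_contra hc; have h1' := h1; rw [if_neg (fun hh : x = d3 + y => hc hh.symm)] at h1'; omega
  have g1 : d1 + x = y := by
    by_contra hc; have h2' := h2; rw [if_neg (fun hh : y = d1 + x => hc hh.symm)] at h2'; omega
  have g2 : d2 + x = y := by
    by_contra hc; have h2' := h2; rw [if_neg (fun hh : y = d2 + x => hc hh.symm)] at h2'; omega
  have g3 : d3 + x = y := by
    by_contra hc; have h2' := h2; rw [if_neg (fun hh : y = d3 + x => hc hh.symm)] at h2'; omega
  -- derived rewriting facts
  have xf1 : x + d1 = y := by rw [add_comm]; exact g1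
  have xf2 : x + d2 = y := by rw [add_comm]; exact g2
  have xf3 : x + d3 = y := by rw [add_comm]; exact g3
  have yf1 : y + d1 = x := by rw [add_comm]; exact f1
  have yf2 : y + d2 = x := by rw [add_comm]; exact f2
  have yf3 : y + d3 = x := by rw [add_comm]; exact f3
  have p12x : d1 + d2 + x = x := by rw [add_assoc, g2, f1]
  have p13x : d1 + d3 + x = x := by rw [add_assoc, g3, f1]
  have p23x : d2 + d3 + x = x := by rw [add_assoc, g3, f2]
  have p12y : d1 + d2 + y = y := by rw [add_assoc, f2, g1]
  have p13y : d1 + d3 + y = y := by rw [add_assoc, f3, g1]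
  have p23y : d2 + d3 + y = y := by rw [add_assoc, f3, g2]
  have q12x : x + (d1 + d2) = x := by rw [add_comm]; exact p12x
  have q13x : x + (d1 + d3) = x := by rw [add_comm]; exact p13x
  have q23x : x + (d2 + d3) = x := by rw [add_comm]; exact p23x
  have q12y : y + (d1 + d2) = y := by rw [add_comm]; exact p12y
  have q13y : y + (d1 + d3) = y := by rw [add_comm]; exact p13y
  have q23y : y + (d2 + d3) = y := by rw [add_comm]; exact p23y
  -- the second counting invariant
  have hC2 : ((deckC ![d1, d2, d3, x]).map (fun C => Multiset.count x (pairSums C))).sum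
      = ((deckC ![d1, d2, d3, y]).map (fun C => Multiset.count x (pairSums C))).sum := by
    rw [hdeck']
  simp only [deckC, hpairs4, cardC, hE01, hE02, hE03, hE12, hE13, hE23,
    Multiset.insert_eq_cons, Multiset.map_cons, Multiset.map_singleton,
    Matrix.cons_val_zero, Matrix.cons_val_one, Matrix.head_cons, Matrix.cons_val_two,
    Matrix.tail_cons, Matrix.cons_val_three,
    pairSums, Multiset.cons_bind, Multiset.singleton_bind, Multiset.count_add,
    Multiset.count_cons, Multiset.count_singleton, Multiset.sum_cons,
    Multiset.sum_singleton] at hC2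
  simp only [f1, f2, f3, g1, g2, g3, xf1, xf2, xf3, yf1, yf2, yf3,
    p12x, p13x, p23x, p12y, p13y, p23y, q12x, q13x, q23x, q12y, q13y, q23y,
    hxy, Ne.symm hxy, if_true, if_false, eq_self_iff_true, ite_true, ite_false] at hC2
  omega

theorem reconstruct {m : ℕ} (hm : 4 ≤ m) {a b : Fin m → M}
    (h : deckC a = deckC b) :
    Finset.univ.val.map a = Finset.univ.val.map b := by
  classical
  by_contra hne
  set A := Finset.univ.val.map a with hAdef
  set B := Finset.univ.val.map b with hBdef
  set X := A - B with hXdef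
  set Y := B - A with hYdef
  set D := A ∩ B with hDdef
  have hcA : Multiset.card A = m := by
    rw [hAdef, Multiset.card_map]
    simp
  have hcB : Multiset.card B = m := by
    rw [hBdef, Multiset.card_map]
    simp
  have hA : A = D + X := by
    refine Multiset.ext.2 (fun z => ?_)
    rw [Multiset.count_add, hDdef, hXdef, Multiset.count_inter, Multiset.count_sub]
    omega
  have hB : B = D + Y := by
    refine Multiset.ext.2 (fun z => ?_)
    rw [Multiset.count_add, hDdef, hYdef, Multiset.count_inter, Multiset.count_sub]
    have := min_comm (Multiset.count z A) (Multiset.count z B)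
    omega
  set e := Multiset.card X with hedef
  have hcXY : Multiset.card Y = e := by
    have h1 := congrArg Multiset.card hA
    have h2 := congrArg Multiset.card hB
    rw [Multiset.card_add] at h1 h2
    omega
  have he0 : e ≠ 0 := by
    intro h0
    apply hne
    have hX0 : X = 0 := Multiset.card_eq_zero.1 (by omega)
    have hY0 : Y = 0 := Multiset.card_eq_zero.1 (by omega)
    rw [hA, hB, hX0, hY0]
  have hdisj : ∀ z, Multiset.count z X = 0 ∨ Multiset.count z Y = 0 := by
    intro z
    rw [hXdef, hYdef, Multiset.count_sub, Multiset.count_sub]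
    omega
  set Pm := (pairsF m).card with hPmdef
  have hPm : 2 * Pm + m = m * m := two_Pm
  -- the basic step from C1, for z an "extra" element of A
  have hstep : ∀ z ∈ X.toFinset,
      PA a z + Pm * Multiset.count z X + Multiset.count z X
        = PA b z + m * Multiset.count z X := by
    intro z hz
    have h1 := C1 h z
    have hzX : 0 < Multiset.count z X := Multiset.count_pos.2 (Multiset.mem_toFinset.1 hz)
    have hzY : Multiset.count z Y = 0 := by rcases hdisj z with h' | h' <;> omega
    have hNa : NA a z = Multiset.count z D + Multiset.count z X := by
      rw [NA, ← hAdef, hA, Multiset.count_add]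
    have hNb : NA b z = Multiset.count z D := by
      rw [NA, ← hBdef, hB, Multiset.count_add, hzY, add_zero]
    rw [hNa, hNb, mul_add, mul_add, ← hPmdef] at h1
    omega
  -- summing over the extras
  have hbound : Pm * e + e ≤ Pm + m * e := by
    have hsum : ∑ z ∈ X.toFinset,
        (PA a z + Pm * Multiset.count z X + Multiset.count z X)
        = ∑ z ∈ X.toFinset, (PA b z + m * Multiset.count z X) :=
      Finset.sum_congr rfl (fun z hz => by rw [hstep z hz])
    simp only [Finset.sum_add_distrib, ← Finset.mul_sum, Multiset.toFinset_sum_count_eq]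
      at hsum
    rw [← hedef] at hsum
    have hPAb : ∑ z ∈ X.toFinset, PA b z ≤ Pm := by
      have h1 : ∀ z, PA b z
          = Multiset.count z ((pairsF m).val.map (fun p => b p.1 + b p.2)) := fun z => rfl
      calc ∑ z ∈ X.toFinset, PA b z
          = ∑ z ∈ X.toFinset,
            Multiset.count z ((pairsF m).val.map (fun p => b p.1 + b p.2)) := by
            exact Finset.sum_congr rfl (fun z _ => h1 z)
        _ ≤ Multiset.card ((pairsF m).val.map (fun p => b p.1 + b p.2)) := sum_count_le_s15 _ _
        _ = Pm := by rw [Multiset.card_map, hPmdef, Finset.card_def]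
    omega
  rcases Nat.lt_or_ge m 5 with hm4 | hm5
  · -- m = 4
    have hm4' : m = 4 := by omega
    subst hm4'
    have hPm6 : Pm = 6 := by omega
    rw [hPm6] at hbound
    have he2 : e = 1 ∨ e = 2 := by omega
    rcases he2 with he | he
    · -- e = 1
      obtain ⟨x, hX⟩ := Multiset.card_eq_one.1 (by omega : Multiset.card X = 1)
      obtain ⟨y, hY⟩ := Multiset.card_eq_one.1 (by omega : Multiset.card Y = 1)
      have hxy : x ≠ y := by
        intro hxyeq
        rcases hdisj x with h' | h' <;>
          simp [hX, hY, ← hxyeq, Multiset.count_singleton] at h'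
      have hcD : Multiset.card D = 3 := by
        have := congrArg Multiset.card hA
        rw [Multiset.card_add, hX] at this
        simp at this
        omega
      refine m4_e1 h (D := D) (x := x) (y := y) ?_ ?_ hcD hxy
      · rw [← hAdef, hA, hX]
      · rw [← hBdef, hB, hY]
    · -- e = 2
      obtain ⟨x1, x2, hX⟩ := Multiset.card_eq_two.1 (by omega : Multiset.card X = 2)
      obtain ⟨y1, y2, hY⟩ := Multiset.card_eq_two.1 (by omega : Multiset.card Y = 2)
      have hne' : ∀ u v : M, u ∈ X → v ∈ Y → u ≠ v := by
        intro u v hu hv huv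
        subst huv
        rcases hdisj u with h' | h'
        · exact absurd h' (by simpa [Multiset.count_eq_zero] using hu)
        · exact absurd h' (by simpa [Multiset.count_eq_zero] using hv)
      have hcD : Multiset.card D = 2 := by
        have := congrArg Multiset.card hA
        rw [Multiset.card_add, hX] at this
        simp at this
        omega
      refine m4_e2 h (D := D) (x1 := x1) (x2 := x2) (y1 := y1) (y2 := y2) ?_ ?_ hcD ?_ ?_
      · rw [← hAdef, hA, hX]
      · rw [← hBdef, hB, hY]
      · constructor
        · exact hne' x1 y1 (by simp [hX]) (by simp [hY])
        · exact hne' x1 y2 (by simp [hX]) (by simp [hY])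
      · constructor
        · exact hne' x2 y1 (by simp [hX]) (by simp [hY])
        · exact hne' x2 y2 (by simp [hX]) (by simp [hY])
  · -- m ≥ 5 : first, e = 1
    have he1 : e = 1 := by
      by_contra he'
      have he2 : 2 ≤ e := by omega
      zify at hPm hbound
      nlinarith [hPm, hbound, mul_nonneg (by omega : (0:ℤ) ≤ (m:ℤ) - 5)
        (by omega : (0:ℤ) ≤ (e:ℤ) - 2)]
    obtain ⟨x, hX⟩ := Multiset.card_eq_one.1 (by omega : Multiset.card X = 1)
    obtain ⟨y, hY⟩ := Multiset.card_eq_one.1 (by omega : Multiset.card Y = 1)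
    have hxX : Multiset.count x X = 1 := by rw [hX]; simp
    have hyY : Multiset.count y Y = 1 := by rw [hY]; simp
    have hPx : PA a x + Pm + 1 = PA b x + m := by
      have := hstep x (by rw [hX]; simp)
      rw [hxX, mul_one, mul_one] at this
      omega
    -- value computation of PA via PV
    have hA1 : A = x ::ₘ D := by rw [hA, hX, add_comm, Multiset.singleton_add]
    have hB1 : B = y ::ₘ D := by rw [hB, hY, add_comm, Multiset.singleton_add]
    have hPVa := PV a x
    have hPVb := PV b x
    rw [← hAdef, hA1, OP_cons, DG_cons] at hPVa
    rw [← hBdef, hB1, OP_cons, DG_cons] at hPVb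
    have hcy : Multiset.count x (D.map (y + ·)) ≤ Multiset.card D := by
      calc Multiset.count x (D.map (y + ·)) ≤ Multiset.card (D.map (y + ·)) :=
            Multiset.count_le_card _ _
        _ = Multiset.card D := Multiset.card_map _ _
    have hcD : Multiset.card D + 1 = m := by
      have := congrArg Multiset.card hA
      rw [Multiset.card_add, hX] at this
      simp at this
      omega
    have hmm : 5 * m ≤ m * m := Nat.mul_le_mul_right m hm5
    omega


end Core

section FnLevel
variable {G : Type*} [AddCommMonoid G] [Mul G] [One G]

/-- the delta tuple -/
def deltaF {n : ℕ} (t : Fin n) : Fin n → G := fun k => if k = t then 1 else 0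

/-- canonical invariant of a function -/
def theta {n : ℕ} (h : (Fin n → G) → G) : Multiset G × G :=
  (Finset.univ.val.map (fun t => h (deltaF t)), h (fun _ => 0))

lemma delta_comp {n : ℕ} (σ : Equiv.Perm (Fin n)) (t : Fin n) :
    (fun i => (deltaF t : Fin n → G) (σ i)) = deltaF (σ.symm t) := by
  funext i
  simp only [deltaF]
  exact if_congr (by rw [Equiv.apply_eq_iff_eq_symm_apply]) rfl rfl

lemma theta_congr {n : ℕ} {h h' : (Fin n → G) → G} (he : funEquiv h h') :
    theta h = theta h' := by
  obtain ⟨σ, hσ⟩ := he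
  unfold theta
  refine Prod.ext ?_ ?_
  · show Finset.univ.val.map (fun t => h (deltaF t)) = _
    have h1 : ∀ t, h (deltaF t) = h' (deltaF (σ.symm t)) := by
      intro t
      rw [hσ (deltaF t), delta_comp]
    calc Finset.univ.val.map (fun t => h (deltaF t))
        = Finset.univ.val.map (fun t => h' (deltaF (σ.symm t))) := Multiset.map_congr rfl
          (fun t _ => h1 t)
      _ = (Finset.univ.val.map ⇑σ.symm).map (fun t => h' (deltaF t)) := by
          rw [Multiset.map_map]; rfl
      _ = Finset.univ.val.map (fun t => h' (deltaF t)) := by rw [univ_map_perm]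
  · show h _ = h' _
    rw [hσ (fun _ => 0)]

lemma eval_zero (hzero : ∀ a : G, a * 0 = 0) {p : ℕ} (e : Fin p → G) (c : G)
    (x : Fin p → G) (hx : ∀ k, x k = 0) :
    (∑ k, e k * x k) + c = c := by
  have h1 : ∀ k ∈ Finset.univ, e k * x k = 0 := fun k _ => by rw [hx k]; exact hzero (e k)
  rw [Finset.sum_congr rfl h1, Finset.sum_const_zero, zero_add]

lemma eval_delta (hmul_one : ∀ a : G, a * 1 = a) (hzero : ∀ a : G, a * 0 = 0)
    {p : ℕ} (e : Fin p → G) (c : G) (t : Fin p) (x : Fin p → G)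
    (hxt : x t = 1) (hx : ∀ k, k ≠ t → x k = 0) :
    (∑ k, e k * x k) + c = e t + c := by
  congr 1
  rw [Finset.sum_eq_single t]
  · rw [hxt]; exact hmul_one (e t)
  · intro k _ hk
    rw [hx k hk]; exact hzero (e k)
  · intro hk
    exact absurd (Finset.mem_univ t) hk

lemma affine_equiv [DecidableEq G] {p : ℕ} {e e' : Fin p → G} {c : G}
    (hc : Finset.univ.val.map e = Finset.univ.val.map e') :
    funEquiv (fun x => (∑ k, e k * x k) + c) (fun x => (∑ k, e' k * x k) + c) := by
  obtain ⟨σ, hσ⟩ := existsPerm hc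
  refine ⟨σ.symm, fun x => ?_⟩
  show (∑ k, e k * x k) + c = (∑ i, e' i * x (σ.symm i)) + c
  congr 1
  exact Fintype.sum_equiv σ (fun k => e k * x k) (fun i => e' i * x (σ.symm i))
    (fun k => by rw [hσ k, Equiv.symm_apply_apply])

end FnLevel

section Minors
variable {G : Type*} [AddCommMonoid G] [Mul G] [One G]

/-- coefficients of the identification minor -/
def eMinor {n : ℕ} (a : Fin (n + 1) → G) (i j : Fin (n + 1)) : Fin n → G :=
  fun k => if (k : ℕ) = (i : ℕ) then a (j.succAbove k) + a j else a (j.succAbove k)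

lemma succAbove_iF {n : ℕ} {i j : Fin (n + 1)} (hij : i < j) (hi : (i : ℕ) < n) :
    j.succAbove ⟨(i : ℕ), hi⟩ = i := by
  have : Fin.castSucc ⟨(i : ℕ), hi⟩ < j := by
    rw [Fin.lt_def]
    simpa using hij
  rw [Fin.succAbove_of_castSucc_lt _ _ this]
  apply Fin.ext
  simp

lemma minor_affine (hdist : ∀ a b c : G, (a + b) * c = a * c + b * c)
    {n : ℕ} {f : (Fin (n + 1) → G) → G} {a : Fin (n + 1) → G} {c : G}
    (hf : ∀ x : Fin (n + 1) → G, f x = (∑ r, a r * x r) + c)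
    (i j : Fin (n + 1)) (hij : i < j) (x : Fin n → G) :
    funMinor f i j hij x = (∑ k, eMinor a i j k * x k) + c := by
  have hi : (i : ℕ) < n := by
    have h1 : (i : ℕ) < (j : ℕ) := hij
    have := j.isLt
    omega
  set iF : Fin n := ⟨(i : ℕ), hi⟩ with hiF
  rw [funMinor, hf]
  set y : Fin (n+1) → G := fun k =>
    if hk : (k : ℕ) < (j : ℕ) then x ⟨(k : ℕ), by have := j.isLt; omega⟩
    else if hk' : (k : ℕ) = (j : ℕ) then
      x ⟨(i : ℕ), by have := j.isLt; have hij' : (i : ℕ) < (j : ℕ) := hij; omega⟩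
    else x ⟨(k : ℕ) - 1, by have := k.isLt; omega⟩ with hy
  have hyj : y j = x iF := by
    simp only [hy]
    rw [dif_neg (lt_irrefl (j : ℕ))]
    simp
    rfl
  have hysA : ∀ k : Fin n, y (j.succAbove k) = x k := by
    intro k
    rcases lt_or_ge ((k : ℕ)) ((j : ℕ)) with hk | hk
    · have hcast : Fin.castSucc k < j := by rw [Fin.lt_def]; simpa using hk
      rw [Fin.succAbove_of_castSucc_lt _ _ hcast]
      simp only [hy]
      rw [dif_pos (show ((Fin.castSucc k : Fin (n+1)) : ℕ) < (j : ℕ) by simpa using hk)]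
      exact congrArg x (Fin.ext (by simp))
    · have hcast : ¬ Fin.castSucc k < j := by rw [Fin.lt_def]; simpa using not_lt.2 hk
      rw [Fin.succAbove_of_le_castSucc _ _ (le_of_not_gt hcast)]
      simp only [hy]
      have hv : ((Fin.succ k : Fin (n+1)) : ℕ) = (k : ℕ) + 1 := Fin.val_succ k
      rw [dif_neg (by omega), dif_neg (by omega)]
      exact congrArg x (Fin.ext (by simp))
  have hsum : (∑ r, a r * y r) = a j * y j + ∑ k, a (j.succAbove k) * y (j.succAbove k) :=
    Fin.sum_univ_succAbove (fun r => a r * y r) j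
  rw [hsum]
  congr 1
  rw [hyj]
  have h1 : ∀ k : Fin n, a (j.succAbove k) * y (j.succAbove k) = a (j.succAbove k) * x k :=
    fun k => by rw [hysA k]
  simp only [h1]
  -- split both sums at iF
  rw [← Finset.add_sum_erase Finset.univ (fun k => a (j.succAbove k) * x k)
    (Finset.mem_univ iF)]
  rw [← Finset.add_sum_erase Finset.univ (fun k => eMinor a i j k * x k)
    (Finset.mem_univ iF)]
  have hsA : j.succAbove iF = i := succAbove_iF hij hi
  have h2 : eMinor a i j iF = a i + a j := by
    rw [eMinor, if_pos rfl, hsA]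
  have h3 : ∀ k ∈ Finset.univ.erase iF, eMinor a i j k * x k = a (j.succAbove k) * x k := by
    intro k hk
    have hne : k ≠ iF := Finset.ne_of_mem_erase hk
    have : (k : ℕ) ≠ (i : ℕ) := fun hc => hne (Fin.ext hc)
    rw [eMinor, if_neg this]
  rw [Finset.sum_congr rfl h3, h2, hsA, hdist]
  abel

lemma map_eMinor [DecidableEq G] {n : ℕ} (a : Fin (n + 1) → G) (i j : Fin (n + 1))
    (hij : i < j) :
    Finset.univ.val.map (eMinor a i j) = cardC a i j := by
  have hi : (i : ℕ) < n := by
    have h1 : (i : ℕ) < (j : ℕ) := hij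
    have := j.isLt
    omega
  set iF : Fin n := ⟨(i : ℕ), hi⟩ with hiF
  have hsA : j.succAbove iF = i := succAbove_iF hij hi
  have hmem : iF ∈ (Finset.univ.val : Multiset (Fin n)) := Finset.mem_univ iF
  have hsplit : (Finset.univ.val : Multiset (Fin n)) = iF ::ₘ Finset.univ.val.erase iF :=
    (Multiset.cons_erase hmem).symm
  rw [hsplit, Multiset.map_cons]
  have h2 : eMinor a i j iF = a i + a j := by rw [eMinor, if_pos rfl, hsA]
  have h3 : (Finset.univ.val.erase iF).map (eMinor a i j)
      = (Finset.univ.val.erase iF).map (fun k => a (j.succAbove k)) := by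
    apply Multiset.map_congr rfl
    intro k hk
    have hne : k ≠ iF :=
      ((Multiset.Nodup.mem_erase_iff Finset.univ.nodup).1 hk).1
    have : (k : ℕ) ≠ (i : ℕ) := fun hc => hne (Fin.ext hc)
    rw [eMinor, if_neg this]
  rw [h2, h3]
  congr 1
  have h4 : (Finset.univ.val.erase iF).map (fun k => a (j.succAbove k))
      = ((Finset.univ.val.erase iF).map (j.succAbove)).map a := by
    rw [Multiset.map_map]; rfl
  have h5 : (Finset.univ.val.erase iF).map (j.succAbove)
      = (Finset.univ.val.map (j.succAbove)).erase i := by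
    rw [Multiset.map_erase _ Fin.succAbove_right_injective, hsA]
  have h6 : (Finset.univ.val : Multiset (Fin n)).map (j.succAbove)
      = (Finset.univ.val : Multiset (Fin (n+1))).erase j := by
    have him := Fin.image_succAbove_univ j
    have h7 := congrArg Finset.val him
    rw [Finset.image_val_of_injOn (Fin.succAbove_right_injective.injOn)] at h7
    rw [h7, Finset.compl_singleton, Finset.erase_val]
  rw [h4, h5, h6, Multiset.erase_comm]

end Minors

section Assemble
variable {G : Type*} [AddCommMonoid G] [Mul G] [One G]

def minorT {n : ℕ} (f : (Fin (n + 1) → G) → G) (p : Fin (n + 1) × Fin (n + 1)) :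
    (Fin n → G) → G :=
  if h : p.1 < p.2 then funMinor f p.1 p.2 h else fun _ => f (fun _ => 0)

lemma fminors_eq {n : ℕ} (f : (Fin (n + 1) → G) → G) :
    fminors f = (pairsF (n + 1)).val.map (minorT f) := by
  have h1 : ∀ q ∈ (pairsF (n + 1)).attach.val,
      (fun p : {x // x ∈ Finset.univ.filter (fun p : Fin (n+1) × Fin (n+1) => p.1 < p.2)} =>
        funMinor f p.1.1 p.1.2
        (by have h := p.2; rw [Finset.mem_filter] at h; exact h.2)) q
      = (minorT f ∘ Subtype.val) q := by
    intro q _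
    have hlt : q.1.1 < q.1.2 := by
      have h := q.2
      simp only [pairsF, Finset.mem_filter] at h
      exact h.2
    show funMinor f q.1.1 q.1.2 _ = minorT f q.1
    rw [minorT, dif_pos hlt]
  calc fminors f
      = (pairsF (n + 1)).attach.val.map (minorT f ∘ Subtype.val) := Multiset.map_congr rfl h1
    _ = ((pairsF (n + 1)).attach.val.map Subtype.val).map (minorT f) :=
        (Multiset.map_map _ _ _).symm
    _ = (pairsF (n + 1)).val.map (minorT f) := by
        rw [Finset.attach_val, Multiset.attach_map_val]

lemma deltaF_self {n : ℕ} (t : Fin n) : (deltaF t : Fin n → G) t = 1 := by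
  simp [deltaF]

lemma deltaF_ne {n : ℕ} (t k : Fin n) (h : k ≠ t) : (deltaF t : Fin n → G) k = 0 := by
  simp [deltaF, h]

lemma theta_minorT [DecidableEq G]
    (hmul_one : ∀ a : G, a * 1 = a)
    (hdist : ∀ a b c : G, (a + b) * c = a * c + b * c)
    (hzero : ∀ a : G, a * 0 = 0)
    {n : ℕ} {f : (Fin (n + 1) → G) → G} {a : Fin (n + 1) → G} {c : G}
    (hf : ∀ x : Fin (n + 1) → G, f x = (∑ r, a r * x r) + c)
    {p : Fin (n + 1) × Fin (n + 1)} (hp : p ∈ (pairsF (n + 1)).val) :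
    theta (minorT f p) = (Multiset.map (fun v => v + c) (cardC a p.1 p.2), c) := by
  have hlt : p.1 < p.2 := by
    have := Finset.mem_def.2 hp
    simpa [pairsF] using this
  have hform : ∀ x, minorT f p x = (∑ k, eMinor a p.1 p.2 k * x k) + c := by
    intro x
    rw [minorT, dif_pos hlt]
    exact minor_affine hdist hf p.1 p.2 hlt x
  unfold theta
  refine Prod.ext ?_ ?_
  · show Finset.univ.val.map (fun t => minorT f p (deltaF t)) = _
    have h2 : ∀ t ∈ (Finset.univ.val : Multiset (Fin n)),
        minorT f p (deltaF t) = eMinor a p.1 p.2 t + c := by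
      intro t _
      rw [hform]
      exact eval_delta hmul_one hzero _ c t _ (deltaF_self t) (fun k hk => deltaF_ne t k hk)
    rw [Multiset.map_congr rfl h2]
    rw [show (fun t => eMinor a p.1 p.2 t + c)
        = ((fun v => v + c) ∘ (eMinor a p.1 p.2)) from rfl]
    rw [← Multiset.map_map, map_eMinor a p.1 p.2 hlt]
  · show minorT f p (fun _ => 0) = c
    rw [hform]
    exact eval_zero hzero _ c _ (fun k => rfl)

end Assemble

end AuxAll

set_option maxHeartbeats 1000000 in
theorem stmt15 {G : Type*} [AddCommMonoid G] [Mul G] [One G]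
    (hmul_one : ∀ a : G, a * 1 = a)
    (hdist : ∀ a b c : G, (a + b) * c = a * c + b * c)
    (hzero : ∀ a : G, a * 0 = 0)
    {n : ℕ} (hn : 4 ≤ n + 1)
    (a b : Fin (n + 1) → G) (c d : G)
    (f g : (Fin (n + 1) → G) → G)
    (hf : ∀ x : Fin (n + 1) → G, f x = (∑ i, a i * x i) + c)
    (hg : ∀ x : Fin (n + 1) → G, g x = (∑ i, b i * x i) + d)
    (hcase : (c = 0 ∧ d = 0) ∨ (∀ u v w : G, u + v = u + w → v = w)) :
    Multiset.Rel funEquiv (fminors f) (fminors g) ↔ funEquiv f g := by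
  classical
  have hp01 : (((⟨0, by omega⟩ : Fin (n+1))), ((⟨1, by omega⟩ : Fin (n+1))))
      ∈ (pairsF (n + 1)).val := by
    rw [Finset.mem_val]
    exact Finset.mem_filter.2 ⟨Finset.mem_univ _, Fin.mk_lt_mk.2 (by omega)⟩
  have hinjc : Function.Injective (fun v : G => v + c) := by
    rcases hcase with ⟨hc0, _⟩ | hcanc
    · intro u v huv
      simpa [hc0] using huv
    · intro u v huv
      apply hcanc c
      rw [add_comm c u, add_comm c v]
      exact huv
  have hinjd : Function.Injective (fun v : G => v + d) := by
    rcases hcase with ⟨_, hd0⟩ | hcanc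
    · intro u v huv
      simpa [hd0] using huv
    · intro u v huv
      apply hcanc d
      rw [add_comm d u, add_comm d v]
      exact huv
  constructor
  · -- forward
    intro hrel
    rw [fminors_eq f, fminors_eq g] at hrel
    have hrel2 : Multiset.Rel (fun h1 h2 => theta h1 = theta h2)
        ((pairsF (n+1)).val.map (minorT f)) ((pairsF (n+1)).val.map (minorT g)) :=
      hrel.mono (fun h1 _ h2 _ hh => theta_congr hh)
    have hrel3 := Multiset.rel_map.1 hrel2
    have hmapeq : (pairsF (n+1)).val.map (fun p => theta (minorT f p))
        = (pairsF (n+1)).val.map (fun q => theta (minorT g q)) :=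
      Multiset.rel_eq.1 (Multiset.rel_map.2 hrel3)
    rw [Multiset.map_congr rfl
        (fun p hp => theta_minorT hmul_one hdist hzero hf hp),
      Multiset.map_congr rfl
        (fun q hq => theta_minorT hmul_one hdist hzero hg hq)] at hmapeq
    -- c = d
    have hcd : c = d := by
      have hmem := Multiset.mem_map_of_mem
        (fun p => (Multiset.map (fun v => v + c) (cardC a p.1 p.2), c)) hp01
      rw [hmapeq] at hmem
      obtain ⟨q, _, heq⟩ := Multiset.mem_map.1 hmem
      exact (congrArg Prod.snd heq).symm
    -- strip the constants
    have hfst := congrArg (Multiset.map Prod.fst) hmapeq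
    rw [Multiset.map_map, Multiset.map_map] at hfst
    have hdeckmap : Multiset.map (Multiset.map (fun v => v + c)) (deckC a)
        = Multiset.map (Multiset.map (fun v => v + d)) (deckC b) := by
      rw [deckC, deckC, Multiset.map_map, Multiset.map_map]
      exact hfst
    rw [← hcd] at hdeckmap
    have hdeck : deckC a = deckC b :=
      Multiset.map_injective (Multiset.map_injective hinjc) hdeckmap
    have hmaps := reconstruct hn hdeck
    obtain ⟨σ, hσ⟩ := existsPerm hmaps
    refine ⟨σ.symm, fun x => ?_⟩
    rw [hf, hg, ← hcd]
    congr 1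
    exact Fintype.sum_equiv σ (fun k => a k * x k) (fun i => b i * x (σ.symm i))
      (fun k => by rw [hσ k, Equiv.symm_apply_apply])
  · -- backward
    intro hfe
    obtain ⟨σ, hσ⟩ := hfe
    have hcd : c = d := by
      have h0 := hσ (fun _ => 0)
      rw [hf, hg] at h0
      rw [eval_zero hzero a c _ (fun k => rfl), eval_zero hzero b d _ (fun k => rfl)] at h0
      exact h0
    have hab : ∀ k, a k = b (σ.symm k) := by
      intro k
      have h0 := hσ (deltaF k)
      rw [hf, hg] at h0
      rw [eval_delta hmul_one hzero a c k _ (deltaF_self k)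
        (fun k' hk' => deltaF_ne k k' hk')] at h0
      rw [eval_delta hmul_one hzero b d (σ.symm k) (fun i => deltaF k (σ i))
        (show deltaF k (σ (σ.symm k)) = 1 by rw [Equiv.apply_symm_apply]; exact deltaF_self k)
        (fun k' hk' => show deltaF k (σ k') = 0 from
          deltaF_ne k (σ k') (fun hc => hk' (by rw [← hc, Equiv.symm_apply_apply])))]
        at h0
      rw [← hcd] at h0
      exact hinjc h0
    have hdeq : deckC a = deckC b := by
      have : a = b ∘ σ.symm := funext hab
      rw [this, deckC_comp]
    rw [fminors_eq f, fminors_eq g]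
    apply Multiset.rel_map.2
    have hrel0 : Multiset.Rel (fun C1 C2 : Multiset G => C1 = C2) (deckC a) (deckC b) :=
      Multiset.rel_eq.2 hdeq
    rw [deckC, deckC] at hrel0
    have hrel1 := Multiset.rel_map.1 hrel0
    refine hrel1.mono (fun p hp q hq hcc => ?_)
    have hltp : p.1 < p.2 := by
      have := Finset.mem_def.2 hp
      simpa [pairsF] using this
    have hltq : q.1 < q.2 := by
      have := Finset.mem_def.2 hq
      simpa [pairsF] using this
    have hfp : minorT f p = fun x => (∑ k, eMinor a p.1 p.2 k * x k) + c := by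
      funext x
      rw [minorT, dif_pos hltp]
      exact minor_affine hdist hf p.1 p.2 hltp x
    have hgq : minorT g q = fun x => (∑ k, eMinor b q.1 q.2 k * x k) + c := by
      funext x
      rw [minorT, dif_pos hltq]
      rw [minor_affine hdist hg q.1 q.2 hltq x, ← hcd]
    have hcoef : Finset.univ.val.map (eMinor a p.1 p.2)
        = Finset.univ.val.map (eMinor b q.1 q.2) := by
      rw [map_eMinor a p.1 p.2 hltp, map_eMinor b q.1 q.2 hltq, hcc]
    rw [hfp, hgq]
    exact affine_equiv hcoef
end

section
/- Let G be a finite field of order q, and let n > max(q, 3). If f : G^n → G is not affine, then there exists a 2-element subset I of {1, …, n} such that the identification minor f_I : G^{n−1} → G is not affine. -/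
lemma minor_eval {G : Type*} {n : ℕ} (f : (Fin (n + 1) → G) → G) (i j : Fin (n + 1))
    (hij : i < j) (y : Fin (n + 1) → G) (hy : y i = y j) :
    funMinor f i j hij (fun k => y (j.succAbove k)) = f y := by
  unfold funMinor
  congr 1
  funext m
  beta_reduce
  by_cases h1 : (m : ℕ) < (j : ℕ)
  · rw [dif_pos h1, Fin.succAbove_of_castSucc_lt]
    · exact congrArg y (Fin.ext rfl)
    · exact h1
  · rw [dif_neg h1]
    by_cases h2 : (m : ℕ) = (j : ℕ)
    · rw [dif_pos h2, Fin.succAbove_of_castSucc_lt]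
      · rw [show (Fin.castSucc ⟨(i:ℕ), _⟩) = i from Fin.ext rfl, hy]
        exact congrArg y (Fin.ext h2.symm)
      · exact hij
    · rw [dif_neg h2, Fin.succAbove_of_le_castSucc]
      · refine congrArg y (Fin.ext ?_)
        simp only [Fin.val_succ]
        omega
      · show (j : ℕ) ≤ (m : ℕ) - 1
        omega

lemma keyRep {G : Type*} [Field G] {n : ℕ} (f : (Fin (n + 1) → G) → G)
    (i j : Fin (n + 1)) (hij : i < j) (b : Fin n → G) (c : G)
    (hb : ∀ x, funMinor f i j hij x = (∑ k, b k * x k) + c) :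
    ∃ A : Fin (n + 1) → G, ∀ y, y i = y j → f y = (∑ m, A m * y m) + c := by
  classical
  set A : Fin (n + 1) → G :=
    fun m => if h : m = j then 0 else b (Fin.exists_succAbove_eq h).choose with hAdef
  have hA : ∀ k : Fin n, A (j.succAbove k) = b k := by
    intro k
    have hne : j.succAbove k ≠ j := Fin.succAbove_ne j k
    rw [hAdef]
    simp only [dif_neg hne]
    congr 1
    exact Fin.succAbove_right_injective (Fin.exists_succAbove_eq hne).choose_spec
  refine ⟨A, fun y hy => ?_⟩
  rw [← minor_eval f i j hij y hy, hb]
  congr 1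
  rw [Fin.sum_univ_succAbove (fun m => A m * y m) j]
  have hAj : A j = 0 := by rw [hAdef]; simp
  simp only [hAj, zero_mul, zero_add, hA]

theorem stmt16 {G : Type*} [Field G] [Fintype G] {n : ℕ}
    (hn : max (Fintype.card G) 3 < n + 1)
    (f : (Fin (n + 1) → G) → G)
    (hf : ¬ ∃ (a : Fin (n + 1) → G) (c : G),
        ∀ x : Fin (n + 1) → G, f x = (∑ i, a i * x i) + c) :
    ∃ (i j : Fin (n + 1)) (hij : i < j),
      ¬ ∃ (b : Fin n → G) (c : G),
        ∀ x : Fin n → G, funMinor f i j hij x = (∑ k, b k * x k) + c := by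
  classical
  by_contra hcon
  push_neg at hcon
  -- Every pair i ≠ j gives an affine representation of f on {y | y i = y j}.
  have key : ∀ i j : Fin (n + 1), i ≠ j →
      ∃ (A : Fin (n + 1) → G) (c : G), ∀ y, y i = y j → f y = (∑ m, A m * y m) + c := by
    intro i j hne
    rcases lt_or_gt_of_ne hne with h | h
    · obtain ⟨b, c, hb⟩ := hcon i j h
      obtain ⟨A, hA⟩ := keyRep f i j h b c hb
      exact ⟨A, c, hA⟩
    · obtain ⟨b, c, hb⟩ := hcon j i h
      obtain ⟨A, hA⟩ := keyRep f j i h b c hb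
      exact ⟨A, c, fun y hy => hA y hy.symm⟩
  set E : Fin (n + 1) → Fin (n + 1) → G := fun m k => if k = m then 1 else 0 with hEdef
  have hEsum : ∀ (A : Fin (n + 1) → G) (m : Fin (n + 1)), (∑ k, A k * E m k) = A m := by
    intro A m
    simp [hEdef, mul_ite]
  have hE2sum : ∀ (A : Fin (n + 1) → G) (i j : Fin (n + 1)),
      (∑ k, A k * (E i k + E j k)) = A i + A j := by
    intro A i j
    simp only [mul_add, Finset.sum_add_distrib, hEsum]
  have hEval : ∀ m k : Fin (n + 1), k ≠ m → E m k = 0 := by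
    intro m k hk; simp [hEdef, hk]
  -- The fundamental "splitting" lemma, using n + 1 ≥ 4.
  have hL : ∀ i j : Fin (n + 1), i ≠ j →
      f (fun k => E i k + E j k) + f 0 = f (E i) + f (E j) := by
    intro i j hne
    have hcard : 1 < (({i, j} : Finset (Fin (n + 1)))ᶜ).card := by
      rw [Finset.card_compl, Finset.card_pair hne]
      simp only [Fintype.card_fin]
      omega
    obtain ⟨k, hk, l, hl, hkl⟩ := Finset.one_lt_card.mp hcard
    simp only [Finset.mem_compl, Finset.mem_insert, Finset.mem_singleton, not_or] at hk hl
    obtain ⟨A, c, hA⟩ := key k l hkl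
    have h0 : f 0 = c := by
      have := hA 0 rfl
      simpa using this
    have hi : f (E i) = A i + c := by
      rw [hA (E i) (by rw [hEval i k (by exact hk.1), hEval i l hl.1]), hEsum]
    have hj : f (E j) = A j + c := by
      rw [hA (E j) (by rw [hEval j k hk.2, hEval j l hl.2]), hEsum]
    have hij : f (fun k => E i k + E j k) = A i + A j + c := by
      rw [hA _ (by rw [hEval i k hk.1, hEval i l hl.1, hEval j k hk.2, hEval j l hl.2]),
        hE2sum]
    rw [h0, hi, hj, hij]; ring
  -- f is affine, contradiction.
  apply hf
  refine ⟨fun m => f (E m) - f 0, f 0, fun y => ?_⟩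
  obtain ⟨i, j, hne, hy⟩ := Fintype.exists_ne_map_eq_of_card_lt y
    (by simp only [Fintype.card_fin]; omega)
  obtain ⟨A, c, hA⟩ := key i j hne
  have h0 : f 0 = c := by simpa using hA 0 rfl
  have hm : ∀ m, m ≠ i → m ≠ j → A m = f (E m) - f 0 := by
    intro m hmi hmj
    have := hA (E m) (by rw [hEval m i (Ne.symm hmi), hEval m j (Ne.symm hmj)])
    rw [hEsum] at this
    rw [this, h0]; ring
  have hsumij : A i + A j = (f (E i) - f 0) + (f (E j) - f 0) := by
    have h1 := hA (fun k => E i k + E j k)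
      (by simp [hEdef, hne, Ne.symm hne])
    rw [hE2sum] at h1
    have h2 := hL i j hne
    rw [h1, h0] at h2
    linear_combination h2 + 2 * h0
  rw [hA y hy, ← h0]
  congr 1
  beta_reduce
  have hzero : ∑ m, (A m - (f (E m) - f 0)) * y m = 0 := by
    rw [← Finset.sum_subset (Finset.subset_univ ({i, j} : Finset (Fin (n + 1))))
      (by intro m _ hm'
          simp only [Finset.mem_insert, Finset.mem_singleton, not_or] at hm'
          rw [hm m hm'.1 hm'.2]; ring)]
    rw [Finset.sum_pair hne]
    linear_combination y i * hsumij - (A j - (f (E j) - f 0)) * hy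
  calc ∑ m, A m * y m
      = ∑ m, ((A m - (f (E m) - f 0)) * y m + (f (E m) - f 0) * y m) := by
        apply Finset.sum_congr rfl; intros; ring
    _ = ∑ m, (f (E m) - f 0) * y m := by
        rw [Finset.sum_add_distrib, hzero, zero_add]
end

section
/- Let F be a field and n ≥ 2, and define Δ_n : F^n → F by Δ_n(x_1, …, x_n) = ∏_{1 ≤ i < j ≤ n} (x_i − x_j). Then for every 2-element subset I of {1, …, n}, the identification minor (Δ_n)_I is the constant zero function; consequently, for every function f : F^n → F (not necessarily a polynomial function) and every such I, one has f_I = (f + Δ_n)_I, and hence deck f = deck (f + Δ_n). -/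
theorem stmt18 {F : Type*} [Field F] {n : ℕ} (hn : 1 ≤ n) :
    ∀ Δ : (Fin (n + 1) → F) → F,
      Δ = (fun x => ∏ p ∈ Finset.univ.filter
            (fun p : Fin (n + 1) × Fin (n + 1) => p.1 < p.2), (x p.1 - x p.2)) →
      ((∀ (i j : Fin (n + 1)) (hij : i < j),
          funMinor Δ i j hij = fun _ => 0) ∧
       (∀ f : (Fin (n + 1) → F) → F,
          (∀ (i j : Fin (n + 1)) (hij : i < j),
            funMinor f i j hij = funMinor (fun x => f x + Δ x) i j hij) ∧
          Multiset.Rel funEquiv (fminors f) (fminors (fun x => f x + Δ x)))) := by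

  intro Δ hΔ
  have hzero : ∀ (i j : Fin (n + 1)) (hij : i < j),
      funMinor Δ i j hij = fun _ => 0 := by
    intro i j hij
    funext x
    unfold funMinor
    subst hΔ
    simp only
    apply Finset.prod_eq_zero (i := (i, j))
    · simp [hij]
    · have hij' : (i : ℕ) < (j : ℕ) := hij
      simp only
      rw [dif_pos hij', dif_neg (by omega : ¬ ((j:ℕ) < (j:ℕ)))]
      simp
  refine ⟨hzero, fun f => ?_⟩
  have hmin : ∀ (i j : Fin (n + 1)) (hij : i < j),
      funMinor f i j hij = funMinor (fun x => f x + Δ x) i j hij := by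
    intro i j hij
    funext x
    have h := congrFun (hzero i j hij) x
    unfold funMinor at h ⊢
    simp only at h ⊢
    rw [h]
    ring
  refine ⟨hmin, ?_⟩
  unfold fminors
  rw [Multiset.rel_map]
  apply Multiset.rel_refl_of_refl_on
  intro p _
  have h := p.2
  rw [Finset.mem_filter] at h
  rw [← hmin p.1.1 p.1.2 h.2]
  exact ⟨Equiv.refl _, fun x => rfl⟩
end

section
/- Let (G, +) be a commutative (abelian) group and let n ≥ 3. Let M = ⟨m_1, …, m_n⟩ and M' = ⟨m_1 + m_2, m_2 + m_3, −m_2, m_4, …, m_n⟩ be multisets over G. Then both of the multisets ⟨m_1 + m_2, m_3, m_4, …, m_n⟩ and ⟨m_1, m_2 + m_3, m_4, …, m_n⟩ occur as cards of M and also as cards of M'; in particular, M and M' have at least two cards in common, so a multiset of cardinality n ≥ 3 over a commutative group is not determined by any two of its cards. -/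
lemma mem_mdeck' {G : Type*} (op : G → G → G) {n : ℕ} (m : Fin n → G) {i j : Fin n}
    (h : i < j) : mcard op m i j ∈ mdeck op m := by
  unfold mdeck
  refine Multiset.mem_map.mpr ⟨(i, j), ?_, rfl⟩
  simpa using h

theorem stmt19 {G : Type*} [AddCommGroup G] {k : ℕ} (m : Fin (k + 3) → G) :
    ∀ m' : Fin (k + 3) → G,
      m' = (fun i : Fin (k + 3) =>
        if i = 0 then m 0 + m 1 else if i = 1 then m 1 + m 2
        else if i = 2 then -(m 1) else m i) →
      (mcard (· + ·) m 0 1 ∈ mdeck (· + ·) m ∧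
       mcard (· + ·) m 0 1 ∈ mdeck (· + ·) m' ∧
       mcard (· + ·) m 1 2 ∈ mdeck (· + ·) m ∧
       mcard (· + ·) m 1 2 ∈ mdeck (· + ·) m') := by
  intro m' hm'
  have h0 : ((0:Fin (k+3)):ℕ) = 0 := rfl
  have h1 : ((1:Fin (k+3)):ℕ) = 1 := rfl
  have h2 : ((2:Fin (k+3)):ℕ) = 2 := rfl
  have lt01 : (0:Fin (k+3)) < 1 := by simp [Fin.lt_def, h0, h1]
  have lt12 : (1:Fin (k+3)) < 2 := by simp [Fin.lt_def, h1, h2, Nat.mod_eq_of_lt (show 2 < k+3 by omega)]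
  have lt02 : (0:Fin (k+3)) < 2 := by simp [Fin.lt_def, h0, h2, Nat.mod_eq_of_lt (show 2 < k+3 by omega)]
  set T : Finset (Fin (k+3)) :=
    Finset.univ.filter (fun a : Fin (k+3) => a ≠ 0 ∧ a ≠ 1 ∧ a ≠ 2) with hT
  have hnm : ∀ a : Fin (k+3), a ∈ T → (a ≠ 0 ∧ a ≠ 1 ∧ a ≠ 2) := by
    intro a ha; simpa [hT] using ha
  have hfilt : ∀ i j : Fin (k+3), ({i, j} : Set (Fin (k+3))) ⊆ {0, 1, 2} → True := fun _ _ _ => trivial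
  have filt01 : Finset.univ.filter (fun a : Fin (k+3) => a ≠ 0 ∧ a ≠ 1) = insert 2 T := by
    ext a
    simp only [hT, Finset.mem_filter, Finset.mem_univ, true_and, Finset.mem_insert,
      Fin.ext_iff, h0, h1, h2]
    omega
  have filt12 : Finset.univ.filter (fun a : Fin (k+3) => a ≠ 1 ∧ a ≠ 2) = insert 0 T := by
    ext a
    simp only [hT, Finset.mem_filter, Finset.mem_univ, true_and, Finset.mem_insert,
      Fin.ext_iff, h0, h1, h2]
    omega
  have filt02 : Finset.univ.filter (fun a : Fin (k+3) => a ≠ 0 ∧ a ≠ 2) = insert 1 T := by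
    ext a
    simp only [hT, Finset.mem_filter, Finset.mem_univ, true_and, Finset.mem_insert,
      Fin.ext_iff, h0, h1, h2]
    omega
  have n0 : (0:Fin (k+3)) ∉ T := fun h => ((hnm _ h).1 rfl)
  have n1 : (1:Fin (k+3)) ∉ T := fun h => ((hnm _ h).2.1 rfl)
  have n2 : (2:Fin (k+3)) ∉ T := fun h => ((hnm _ h).2.2 rfl)
  have ne10 : (1:Fin (k+3)) ≠ 0 := by simp [Fin.ext_iff, h0, h1]
  have ne20 : (2:Fin (k+3)) ≠ 0 := by simp [Fin.ext_iff, h0, h2, Nat.mod_eq_of_lt (show 2 < k+3 by omega)]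
  have ne21 : (2:Fin (k+3)) ≠ 1 := by simp [Fin.ext_iff, h1, h2, Nat.mod_eq_of_lt (show 2 < k+3 by omega)]
  have hmap : T.val.map m' = T.val.map m := by
    apply Multiset.map_congr rfl
    intro a ha
    obtain ⟨ha0, ha1, ha2⟩ := hnm a ha
    simp [hm', ha0, ha1, ha2]
  have hm'0 : m' 0 = m 0 + m 1 := by simp [hm']
  have hm'1 : m' 1 = m 1 + m 2 := by simp [hm', ne10]
  have hm'2 : m' 2 = -(m 1) := by simp [hm', ne20, ne21]
  have card1 : mcard (· + ·) m' 1 2 = mcard (· + ·) m 0 1 := by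
    unfold mcard
    rw [filt12, filt01, Finset.insert_val_of_notMem n0, Finset.insert_val_of_notMem n2,
      Multiset.map_cons, Multiset.map_cons, hmap, hm'0, hm'1, hm'2]
    have : m 1 + m 2 + -(m 1) = m 2 := by abel
    simp only [this]
    rw [← Multiset.singleton_add, ← Multiset.singleton_add]
    abel
  have card2 : mcard (· + ·) m' 0 2 = mcard (· + ·) m 1 2 := by
    unfold mcard
    rw [filt02, filt12, Finset.insert_val_of_notMem n1, Finset.insert_val_of_notMem n0,
      Multiset.map_cons, Multiset.map_cons, hmap, hm'0, hm'1, hm'2]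
    have : m 0 + m 1 + -(m 1) = m 0 := by abel
    simp only [this]
    rw [← Multiset.singleton_add, ← Multiset.singleton_add]
    abel
  refine ⟨mem_mdeck' _ m lt01, ?_, mem_mdeck' _ m lt12, ?_⟩
  · rw [← card1]; exact mem_mdeck' _ m' lt12
  · rw [← card2]; exact mem_mdeck' _ m' lt02
end
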